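/- arXiv:1609.00794 — 5 statements merged into one kernel-verified Lean document; each statement's English description precedes it below -/
import Mathlib

section
/- The nonautonomous logistic equation u'(t) = u(t)(a(t) − b(t)u(t)) has exactly one entire solution u* : ℝ → ℝ that is bounded and satisfies inf_{t∈ℝ} u*(t) > 0; moreover this solution satisfies (inf_{t∈ℝ} a(t))/(sup_{t∈ℝ} b(t)) ≤ u*(t) ≤ (sup_{t∈ℝ} a(t))/(inf_{t∈ℝ} b(t)) for all t ∈ ℝ. -/
open MeasureTheory Real Set Filter Topology

namespace LogisticAux0




noncomputable def Aint (a : ℝ → ℝ) (t : ℝ) : ℝ := ∫ s in (0:ℝ)..t, a s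

theorem hasDerivAt_Aint {a : ℝ → ℝ} (ha : Continuous a) (t : ℝ) :
    HasDerivAt (Aint a) (a t) t :=
  intervalIntegral.integral_hasDerivAt_right (ha.intervalIntegrable _ _)
    (ha.stronglyMeasurableAtFilter _ _) ha.continuousAt

theorem continuous_Aint {a : ℝ → ℝ} (ha : Continuous a) : Continuous (Aint a) :=
  Differentiable.continuous (fun t => (hasDerivAt_Aint ha t).differentiableAt)

theorem Aint_sub {a : ℝ → ℝ} (ha : Continuous a) (s t : ℝ) :
    Aint a t - Aint a s = ∫ x in s..t, a x :=
  intervalIntegral.integral_interval_sub_left (ha.intervalIntegrable _ _)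
    (ha.intervalIntegrable _ _)

theorem Aint_sub_ge {a : ℝ → ℝ} {α : ℝ} (ha : Continuous a) (hα : ∀ x, α ≤ a x)
    {s t : ℝ} (hst : s ≤ t) : α * (t - s) ≤ Aint a t - Aint a s := by
  rw [Aint_sub ha]
  have h1 : α * (t - s) = ∫ _x in s..t, α := by
    rw [intervalIntegral.integral_const, smul_eq_mul, mul_comm]
  rw [h1]
  exact intervalIntegral.integral_mono_on hst intervalIntegrable_const
    (ha.intervalIntegrable _ _) (fun x _ => hα x)

theorem Aint_zero (a : ℝ → ℝ) : Aint a 0 = 0 := intervalIntegral.integral_same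

/-- exp(Aint a) has derivative a t * exp(Aint a t).  -/
theorem hasDerivAt_expA {a : ℝ → ℝ} (ha : Continuous a) (t : ℝ) :
    HasDerivAt (fun s => exp (Aint a s)) (exp (Aint a t) * a t) t :=
  (hasDerivAt_Aint ha t).exp

/-- interval integral of a * exp (Aint a). -/
theorem intervalIntegral_a_expA {a : ℝ → ℝ} (ha : Continuous a) (x t : ℝ) :
    ∫ s in x..t, exp (Aint a s) * a s = exp (Aint a t) - exp (Aint a x) :=
  intervalIntegral.integral_eq_sub_of_hasDerivAt (fun y _ => hasDerivAt_expA ha y)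
    (((continuous_exp.comp (continuous_Aint ha)).mul ha).intervalIntegrable _ _)

/-- Integrability of a * exp(A) on Iic t. -/
theorem integrableOn_a_expA {a : ℝ → ℝ} {α : ℝ} (ha : Continuous a)
    (hα : ∀ x, α ≤ a x) (hαpos : 0 < α) (t : ℝ) :
    IntegrableOn (fun s => exp (Aint a s) * a s) (Iic t) := by
  have hcont : Continuous fun s => exp (Aint a s) * a s :=
    (continuous_exp.comp (continuous_Aint ha)).mul ha
  refine integrableOn_Iic_of_intervalIntegral_norm_bounded (l := atBot)
    (a := fun x : ℝ => x) (exp (Aint a t)) t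
    (fun i => hcont.integrableOn_Ioc) tendsto_id ?_
  filter_upwards [eventually_le_atBot t] with x hx
  have hnorm : ∀ s, ‖exp (Aint a s) * a s‖ = exp (Aint a s) * a s := fun s =>
    Real.norm_of_nonneg (mul_nonneg (exp_pos _).le (hαpos.le.trans (hα s)))
  simp only [hnorm]
  rw [intervalIntegral_a_expA ha]
  have := exp_pos (Aint a x)
  linarith

/-- Key improper integral identity: ∫_{-∞}^t a e^{A} = e^{A t}. -/
theorem integral_Iic_a_expA {a : ℝ → ℝ} {α : ℝ} (ha : Continuous a)
    (hα : ∀ x, α ≤ a x) (hαpos : 0 < α) (t : ℝ) :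
    ∫ s in Iic t, exp (Aint a s) * a s = exp (Aint a t) := by
  have htend : Tendsto (fun s => exp (Aint a s)) atBot (𝓝 0) := by
    have hb : ∀ s ≤ (0:ℝ), exp (Aint a s) ≤ exp (α * s) := by
      intro s hs
      apply exp_le_exp.2
      have := Aint_sub_ge ha hα hs
      rw [Aint_zero] at this
      nlinarith
    have h0 : Tendsto (fun s : ℝ => exp (α * s)) atBot (𝓝 0) := by
      apply Real.tendsto_exp_atBot.comp
      exact Tendsto.const_mul_atBot hαpos tendsto_id
    refine squeeze_zero_norm' ?_ h0
    filter_upwards [eventually_le_atBot (0:ℝ)] with s hs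
    rw [Real.norm_of_nonneg (exp_pos _).le]
    exact hb s hs
  have := integral_Iic_of_hasDerivAt_of_tendsto' (a := t)
    (fun x _ => hasDerivAt_expA ha x) (integrableOn_a_expA ha hα hαpos t) htend
  rw [this, sub_zero]


variable {a b u : ℝ → ℝ} {α Au β Bu : ℝ}
variable {a b : ℝ → ℝ} {α Au β Bu : ℝ}


/-- Integrability of e^A * b on Iic t, by domination with (Bu/α) a e^A. -/
theorem integrableOn_g (ha : Continuous a) (hb : Continuous b)
    (hα : ∀ x, α ≤ a x) (hαpos : 0 < α) (hβ : ∀ x, (0:ℝ) ≤ b x) (hB : ∀ x, b x ≤ Bu) (t : ℝ) :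
    IntegrableOn (fun s => exp (Aint a s) * b s) (Iic t) := by
  have hint : IntegrableOn (fun s => (Bu / α) * (exp (Aint a s) * a s)) (Iic t) :=
    (integrableOn_a_expA ha hα hαpos t).const_mul _
  refine hint.mono' ?_ ?_
  · exact ((continuous_exp.comp (continuous_Aint ha)).mul hb).aestronglyMeasurable
  · refine ae_of_all _ fun s => ?_
    rw [Real.norm_of_nonneg (mul_nonneg (exp_pos _).le (hβ s))]
    have h1 : b s ≤ (Bu / α) * a s := by
      have h2 : Bu ≤ (Bu / α) * a s := by
        rw [div_mul_eq_mul_div, le_div_iff₀ hαpos]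
        have hBnn : 0 ≤ Bu := le_trans (hβ s) (hB s)
        nlinarith [hα s, hB s]
      exact (hB s).trans h2
    nlinarith [exp_pos (Aint a s), hβ s, (hα s).trans_lt' hαpos]

noncomputable def Fint (a b : ℝ → ℝ) (t : ℝ) : ℝ := ∫ s in Iic t, exp (Aint a s) * b s

theorem Fint_le (ha : Continuous a) (hb : Continuous b)
    (hα : ∀ x, α ≤ a x) (hαpos : 0 < α) (hβ : ∀ x, (0:ℝ) ≤ b x) (hB : ∀ x, b x ≤ Bu) (t : ℝ) :
    Fint a b t ≤ (Bu / α) * exp (Aint a t) := by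
  have h1 : Fint a b t ≤ ∫ s in Iic t, (Bu / α) * (exp (Aint a s) * a s) := by
    refine setIntegral_mono_on (integrableOn_g ha hb hα hαpos hβ hB t)
      ((integrableOn_a_expA ha hα hαpos t).const_mul _) measurableSet_Iic fun s _ => ?_
    have h2 : b s ≤ (Bu / α) * a s := by
      have h3 : Bu ≤ (Bu / α) * a s := by
        rw [div_mul_eq_mul_div, le_div_iff₀ hαpos]
        have hBnn : 0 ≤ Bu := le_trans (hβ s) (hB s)
        nlinarith [hα s, hB s]
      exact (hB s).trans h3
    nlinarith [exp_pos (Aint a s)]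
  rw [integral_const_mul, integral_Iic_a_expA ha hα hαpos t] at h1
  exact h1

theorem Fint_ge (ha : Continuous a) (hb : Continuous b)
    (hα : ∀ x, α ≤ a x) (hαpos : 0 < α) (hA : ∀ x, a x ≤ Au)
    (hβl : ∀ x, β ≤ b x) (hβpos : 0 < β) (hBu : ∀ x, b x ≤ Bu) (t : ℝ) :
    (β / Au) * exp (Aint a t) ≤ Fint a b t := by
  have hAupos : 0 < Au := hαpos.trans_le ((hα 0).trans (hA 0))
  have h1 : (∫ s in Iic t, (β / Au) * (exp (Aint a s) * a s)) ≤ Fint a b t := by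
    refine setIntegral_mono_on ((integrableOn_a_expA ha hα hαpos t).const_mul _)
      (integrableOn_g ha hb hα hαpos (fun x => hβpos.le.trans (hβl x))
        hBu t) measurableSet_Iic fun s _ => ?_
    have h2 : (β / Au) * a s ≤ β := by
      rw [div_mul_eq_mul_div, div_le_iff₀ hAupos]
      nlinarith [hA s, hα s]
    have := hβl s
    nlinarith [exp_pos (Aint a s)]
  rw [integral_const_mul, integral_Iic_a_expA ha hα hαpos t] at h1
  exact h1

theorem hasDerivAt_Fint (ha : Continuous a) (hb : Continuous b)
    (hα : ∀ x, α ≤ a x) (hαpos : 0 < α) (hβ : ∀ x, (0:ℝ) ≤ b x) (hB : ∀ x, b x ≤ Bu) (t : ℝ) :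
    HasDerivAt (Fint a b) (exp (Aint a t) * b t) t := by
  have hg : Continuous fun s => exp (Aint a s) * b s :=
    (continuous_exp.comp (continuous_Aint ha)).mul hb
  have heq : Fint a b = fun t => Fint a b 0 + ∫ s in (0:ℝ)..t, exp (Aint a s) * b s := by
    funext x
    have := intervalIntegral.integral_Iic_sub_Iic (integrableOn_g ha hb hα hαpos hβ hB 0)
      (integrableOn_g ha hb hα hαpos hβ hB x)
    unfold Fint
    linarith [this]
  rw [heq]
  simpa using
    (intervalIntegral.integral_hasDerivAt_right (hg.intervalIntegrable 0 t)
      (hg.stronglyMeasurableAtFilter _ _) hg.continuousAt)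


variable {a b u : ℝ → ℝ} {α Au β Bu : ℝ}

noncomputable def ustar (a b : ℝ → ℝ) (t : ℝ) : ℝ := exp (Aint a t) / Fint a b t

section

variable (ha : Continuous a) (hb : Continuous b)
  (hα : ∀ x, α ≤ a x) (hαpos : 0 < α) (hA : ∀ x, a x ≤ Au)
  (hβl : ∀ x, β ≤ b x) (hβpos : 0 < β) (hBu : ∀ x, b x ≤ Bu)

include ha hb hα hαpos hA hβl hβpos hBu

theorem Fint_pos (t : ℝ) : 0 < Fint a b t := by
  have hAupos : 0 < Au := hαpos.trans_le ((hα 0).trans (hA 0))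
  have := Fint_ge ha hb hα hαpos hA hβl hβpos hBu t
  nlinarith [exp_pos (Aint a t), div_pos hβpos hAupos]

theorem ustar_ge (t : ℝ) : α / Bu ≤ ustar a b t := by
  have hF := Fint_le ha hb hα hαpos (fun x => hβpos.le.trans (hβl x)) hBu t
  have hFpos := Fint_pos ha hb hα hαpos hA hβl hβpos hBu t
  have hBupos : 0 < Bu := hβpos.trans_le (hβl 0 |>.trans (hBu 0))
  unfold ustar
  rw [div_le_div_iff₀ hBupos hFpos]
  have he := exp_pos (Aint a t)
  calc α * Fint a b t ≤ α * ((Bu / α) * exp (Aint a t)) := by nlinarith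
    _ = exp (Aint a t) * Bu := by field_simp
    _ = _ := by ring

theorem ustar_le (t : ℝ) : ustar a b t ≤ Au / β := by
  have hF := Fint_ge ha hb hα hαpos hA hβl hβpos hBu t
  have hFpos := Fint_pos ha hb hα hαpos hA hβl hβpos hBu t
  have hAupos : 0 < Au := hαpos.trans_le ((hα 0).trans (hA 0))
  unfold ustar
  rw [div_le_div_iff₀ hFpos hβpos]
  have he := exp_pos (Aint a t)
  calc exp (Aint a t) * β = Au * ((β / Au) * exp (Aint a t)) := by field_simp
    _ ≤ Au * Fint a b t := by nlinarith

theorem hasDerivAt_ustar (t : ℝ) :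
    HasDerivAt (ustar a b) (ustar a b t * (a t - b t * ustar a b t)) t := by
  have hFpos := Fint_pos ha hb hα hαpos hA hβl hβpos hBu t
  have hd : HasDerivAt (ustar a b)
      ((exp (Aint a t) * a t * Fint a b t - exp (Aint a t) * (exp (Aint a t) * b t)) /
        Fint a b t ^ 2) t := by
    exact ((hasDerivAt_Aint ha t).exp.div
      (hasDerivAt_Fint ha hb hα hαpos (fun x => hβpos.le.trans (hβl x)) hBu t) hFpos.ne')
  convert hd using 1
  unfold ustar
  field_simp

end

/-- Uniqueness: any bounded, positively-bounded-below entire solution equals ustar. -/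
theorem solution_eq_ustar (ha : Continuous a) (hb : Continuous b)
    (hα : ∀ x, α ≤ a x) (hαpos : 0 < α) (hA : ∀ x, a x ≤ Au)
    (hβl : ∀ x, β ≤ b x) (hβpos : 0 < β) (hBu : ∀ x, b x ≤ Bu)
    (hu : ∀ t, HasDerivAt u (u t * (a t - b t * u t)) t)
    {m M : ℝ} (hm : 0 < m) (hml : ∀ t, m ≤ u t) (hM : ∀ t, u t ≤ M) :
    u = ustar a b := by
  have hupos : ∀ t, 0 < u t := fun t => hm.trans_le (hml t)
  have hspos : ∀ t, 0 < ustar a b t := fun t =>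
    (div_pos hαpos (hβpos.trans_le ((hβl 0).trans (hBu 0)))).trans_le
      (ustar_ge ha hb hα hαpos hA hβl hβpos hBu t)
  set φ : ℝ → ℝ := fun t => ((u t)⁻¹ - (ustar a b t)⁻¹) * exp (Aint a t) with hφ
  have hderiv : ∀ t, HasDerivAt φ 0 t := by
    intro t
    have h1 : HasDerivAt (fun t => (u t)⁻¹)
        (-(u t * (a t - b t * u t)) / u t ^ 2) t := (hu t).inv (hupos t).ne'
    have h2 : HasDerivAt (fun t => (ustar a b t)⁻¹)
        (-(ustar a b t * (a t - b t * ustar a b t)) / ustar a b t ^ 2) t :=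
      (hasDerivAt_ustar ha hb hα hαpos hA hβl hβpos hBu t).inv (hspos t).ne'
    have h3 := ((h1.sub h2).mul (hasDerivAt_Aint ha t).exp)
    refine h3.congr_deriv ?_
    simp only [Pi.sub_apply]
    have h4 := (hupos t).ne'
    have h5 := (hspos t).ne'
    field_simp
    ring
  have hconst : ∀ t, φ t = φ 0 :=
    fun t => is_const_of_deriv_eq_zero
      (fun x => (hderiv x).differentiableAt) (fun x => (hderiv x).deriv) t 0
  have hφ0 : φ 0 = 0 := by
    by_contra hne
    -- |φ 0| ≤ C * exp (α t) for t ≤ 0, which tends to 0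
    have hBupos : 0 < Bu := hβpos.trans_le ((hβl 0).trans (hBu 0))
    set C : ℝ := m⁻¹ + Bu / α with hC
    have hCpos : 0 < C := add_pos (inv_pos.2 hm) (div_pos hBupos hαpos)
    have hbound : ∀ t ≤ (0:ℝ), |φ 0| ≤ C * exp (α * t) := by
      intro t ht
      rw [← hconst t, hφ]
      have hA2 : Aint a t ≤ α * t := by
        have := Aint_sub_ge ha hα ht
        rw [Aint_zero] at this; nlinarith
      have hd1 : (0:ℝ) < (u t)⁻¹ := inv_pos.2 (hupos t)
      have hd1' : (u t)⁻¹ ≤ m⁻¹ := by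
        apply inv_anti₀ hm (hml t)
      have hd2 : (0:ℝ) < (ustar a b t)⁻¹ := inv_pos.2 (hspos t)
      have hd2' : (ustar a b t)⁻¹ ≤ Bu / α := by
        rw [inv_le_comm₀ (hspos t) (div_pos hBupos hαpos), inv_div]
        exact ustar_ge ha hb hα hαpos hA hβl hβpos hBu t
      have habs : |(u t)⁻¹ - (ustar a b t)⁻¹| ≤ C := by
        rw [abs_sub_le_iff]; constructor <;> nlinarith
      rw [abs_mul, abs_of_pos (exp_pos _)]
      calc |(u t)⁻¹ - (ustar a b t)⁻¹| * exp (Aint a t)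
          ≤ C * exp (Aint a t) := by nlinarith [exp_pos (Aint a t)]
        _ ≤ C * exp (α * t) := by nlinarith [exp_le_exp.2 hA2]
    have htend : Tendsto (fun t : ℝ => C * exp (α * t)) atBot (𝓝 0) := by
      rw [show (0:ℝ) = C * 0 by ring]
      exact (Real.tendsto_exp_atBot.comp
        (Tendsto.const_mul_atBot hαpos tendsto_id)).const_mul C
    have : |φ 0| ≤ 0 := by
      refine ge_of_tendsto htend ?_
      filter_upwards [eventually_le_atBot (0:ℝ)] with t ht
      exact hbound t ht
    exact hne (abs_eq_zero.1 (le_antisymm this (abs_nonneg _)))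
  funext t
  have h6 : φ t = 0 := (hconst t).trans hφ0
  rw [hφ] at h6
  have h7 : (u t)⁻¹ = (ustar a b t)⁻¹ := by
    have := exp_pos (Aint a t)
    rcases mul_eq_zero.1 h6 with h | h
    · linarith [sub_eq_zero.1 h]
    · exact absurd h this.ne'
  exact inv_injective h7

end LogisticAux0

/-- The nonautonomous logistic equation `u' = u (a - b u)`, with `a, b`
continuous, bounded, and with positive infimum, has exactly one entire solution that is
bounded and has positive infimum; moreover this solution `u*` satisfies
`(inf a) / (sup b) ≤ u*(t) ≤ (sup a) / (inf b)` for all `t`. -/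
theorem logistic_unique_bounded_positive_entire_solution
    (a b : ℝ → ℝ)
    (ha_cont : Continuous a) (hb_cont : Continuous b)
    (ha_bddAbove : BddAbove (Set.range a)) (hb_bddAbove : BddAbove (Set.range b))
    (ha_inf_pos : 0 < ⨅ t, a t) (hb_inf_pos : 0 < ⨅ t, b t) :
    (∃! u : ℝ → ℝ,
        (∀ t, HasDerivAt u (u t * (a t - b t * u t)) t) ∧
        BddAbove (Set.range u) ∧ 0 < ⨅ t, u t) ∧
    (∀ u : ℝ → ℝ,
        ((∀ t, HasDerivAt u (u t * (a t - b t * u t)) t) ∧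
          BddAbove (Set.range u) ∧ 0 < ⨅ t, u t) →
        ∀ t, (⨅ s, a s) / (⨆ s, b s) ≤ u t ∧ u t ≤ (⨆ s, a s) / (⨅ s, b s)) := by
  classical
  set α := ⨅ t, a t with hαdef
  set Au := ⨆ t, a t with hAudef
  set β := ⨅ t, b t with hβdef
  set Bu := ⨆ t, b t with hBudef
  have ha_bddBelow : BddBelow (Set.range a) := by
    by_contra h
    rw [hαdef, Real.iInf_of_not_bddBelow h] at ha_inf_pos
    exact lt_irrefl _ ha_inf_pos
  have hb_bddBelow : BddBelow (Set.range b) := by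
    by_contra h
    rw [hβdef, Real.iInf_of_not_bddBelow h] at hb_inf_pos
    exact lt_irrefl _ hb_inf_pos
  have hα : ∀ t, α ≤ a t := fun t => ciInf_le ha_bddBelow t
  have hA : ∀ t, a t ≤ Au := fun t => le_ciSup ha_bddAbove t
  have hβl : ∀ t, β ≤ b t := fun t => ciInf_le hb_bddBelow t
  have hBu : ∀ t, b t ≤ Bu := fun t => le_ciSup hb_bddAbove t
  have hαpos : 0 < α := ha_inf_pos
  have hβpos : 0 < β := hb_inf_pos
  have hBupos : 0 < Bu := hβpos.trans_le ((hβl 0).trans (hBu 0))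
  have hAupos : 0 < Au := hαpos.trans_le ((hα 0).trans (hA 0))
  -- properties of ustar
  have hsd : ∀ t, HasDerivAt (LogisticAux0.ustar a b)
      (LogisticAux0.ustar a b t * (a t - b t * LogisticAux0.ustar a b t)) t :=
    LogisticAux0.hasDerivAt_ustar ha_cont hb_cont hα hαpos hA hβl hβpos hBu
  have hsge : ∀ t, α / Bu ≤ LogisticAux0.ustar a b t :=
    LogisticAux0.ustar_ge ha_cont hb_cont hα hαpos hA hβl hβpos hBu
  have hsle : ∀ t, LogisticAux0.ustar a b t ≤ Au / β :=
    LogisticAux0.ustar_le ha_cont hb_cont hα hαpos hA hβl hβpos hBu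
  have hsbdd : BddAbove (Set.range (LogisticAux0.ustar a b)) := by
    refine ⟨Au / β, ?_⟩
    rintro y ⟨t, rfl⟩
    exact hsle t
  have hsinf : 0 < ⨅ t, LogisticAux0.ustar a b t :=
    lt_of_lt_of_le (div_pos hαpos hBupos) (le_ciInf hsge)
  -- uniqueness: any admissible u equals ustar
  have huniq : ∀ u : ℝ → ℝ,
      ((∀ t, HasDerivAt u (u t * (a t - b t * u t)) t) ∧
        BddAbove (Set.range u) ∧ 0 < ⨅ t, u t) → u = LogisticAux0.ustar a b := by
    rintro u ⟨hu, hubdd, huinf⟩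
    have hu_bddBelow : BddBelow (Set.range u) := by
      by_contra h
      rw [Real.iInf_of_not_bddBelow h] at huinf
      exact lt_irrefl _ huinf
    have hml : ∀ t, (⨅ t, u t) ≤ u t := fun t => ciInf_le hu_bddBelow t
    obtain ⟨M, hM⟩ := hubdd
    have hMl : ∀ t, u t ≤ M := fun t => hM ⟨t, rfl⟩
    exact LogisticAux0.solution_eq_ustar ha_cont hb_cont hα hαpos hA hβl hβpos hBu hu
      huinf hml hMl
  constructor
  · exact ⟨LogisticAux0.ustar a b, ⟨hsd, hsbdd, hsinf⟩, huniq⟩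
  · intro u hu t
    rw [huniq u hu]
    exact ⟨hsge t, hsle t⟩
end

section
/- The unique bounded entire solution u* of the nonautonomous logistic equation with inf_{t∈ℝ} u*(t) > 0 attracts all positive solutions: for every t₀ ∈ ℝ and every u₀ > 0, the solution u(t; t₀, u₀) of the equation with u(t₀; t₀, u₀) = u₀ is defined for all t ≥ t₀ and satisfies |u(t + t₀; t₀, u₀) − u*(t + t₀)| → 0 as t → ∞. -/
open Filter Set

private lemma bddBelow_of_pos_iInf' {f : ℝ → ℝ} (h : 0 < ⨅ t, f t) :
    BddBelow (Set.range f) := by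
  by_contra hb
  rw [Real.iInf_of_not_bddBelow hb] at h
  exact lt_irrefl _ h

private lemma le_of_pos_iInf' {f : ℝ → ℝ} (h : 0 < ⨅ t, f t) (t : ℝ) :
    (⨅ s, f s) ≤ f t :=
  ciInf_le (bddBelow_of_pos_iInf' h) t

private lemma alg1 (V A B : ℝ) (hV : V ≠ 0) :
    -(B - A * V) / V ^ 2 = V⁻¹ * (A - B * V⁻¹) := by
  have h2 : V ^ 2 ≠ 0 := pow_ne_zero 2 hV
  rw [div_eq_iff h2]
  field_simp
  ring_nf
  try simp

private lemma alg2 (V A B : ℝ) (hV : V ≠ 0) :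
    -(V * (A - B * V)) / V ^ 2 = B - A * V⁻¹ := by
  have h2 : V ^ 2 ≠ 0 := pow_ne_zero 2 hV
  rw [div_eq_iff h2]
  field_simp
  ring_nf
  try simp

private lemma alg3 (W U : ℝ) (hW : W ≠ 0) (hU : U ≠ 0) :
    W - U = W * U * (W⁻¹ - U⁻¹) * (-1) := by
  field_simp
  ring

private lemma alg4 (e E p aa bb : ℝ) (h : e * E = 1) :
    e * (-aa) * p + e * (bb * E) = bb - aa * (e * p) := by
  linear_combination bb * h

/-- The unique bounded entire solution `u*` of the nonautonomous logistic
equation with positive infimum attracts all positive solutions: for every `t₀` and `u₀ > 0`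
the solution with value `u₀` at `t₀` is defined for all `t ≥ t₀` and
`|u(t + t₀; t₀, u₀) − u*(t + t₀)| → 0` as `t → ∞`. -/
theorem logistic_entire_solution_attracts_positive_solutions
    (a b ustar : ℝ → ℝ)
    (ha_cont : Continuous a) (hb_cont : Continuous b)
    (ha_bddAbove : BddAbove (Set.range a)) (hb_bddAbove : BddAbove (Set.range b))
    (ha_inf_pos : 0 < ⨅ t, a t) (hb_inf_pos : 0 < ⨅ t, b t)
    (hstar : (∀ t, HasDerivAt ustar (ustar t * (a t - b t * ustar t)) t) ∧
      BddAbove (Set.range ustar) ∧ 0 < ⨅ t, ustar t)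
    (t₀ u₀ : ℝ) (hu₀ : 0 < u₀) :
    (∃ w : ℝ → ℝ, w t₀ = u₀ ∧
      ∀ t ∈ Set.Ici t₀, HasDerivWithinAt w (w t * (a t - b t * w t)) (Set.Ici t₀) t) ∧
    (∀ w : ℝ → ℝ, w t₀ = u₀ →
      (∀ t ∈ Set.Ici t₀, HasDerivWithinAt w (w t * (a t - b t * w t)) (Set.Ici t₀) t) →
      Filter.Tendsto (fun t => |w (t + t₀) - ustar (t + t₀)|) Filter.atTop (nhds 0)) := by
  obtain ⟨hstar_deriv, hstar_bdd, hstar_inf⟩ := hstar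
  set α : ℝ := ⨅ t, a t with hα_def
  set β : ℝ := ⨅ t, b t with hβ_def
  have hα : ∀ t, α ≤ a t := le_of_pos_iInf' ha_inf_pos
  have hβ : ∀ t, β ≤ b t := le_of_pos_iInf' hb_inf_pos
  have ha_pos : ∀ t, 0 < a t := fun t => lt_of_lt_of_le ha_inf_pos (hα t)
  have hb_pos : ∀ t, 0 < b t := fun t => lt_of_lt_of_le hb_inf_pos (hβ t)
  have hustar_pos : ∀ t, 0 < ustar t :=
    fun t => lt_of_lt_of_le hstar_inf (le_of_pos_iInf' hstar_inf t)
  set mA : ℝ := sSup (Set.range a) with hmA_def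
  have hamA : ∀ t, a t ≤ mA := fun t => le_csSup ha_bddAbove ⟨t, rfl⟩
  set Ms : ℝ := sSup (Set.range ustar) with hMs_def
  have hMs : ∀ t, ustar t ≤ Ms := fun t => le_csSup hstar_bdd ⟨t, rfl⟩
  have hMs_pos : 0 < Ms := lt_of_lt_of_le (hustar_pos t₀) (hMs t₀)
  have hustar_cont : Continuous ustar :=
    continuous_iff_continuousAt.2 fun t => (hstar_deriv t).continuousAt
  -- the integral of a
  set A : ℝ → ℝ := fun t => ∫ s in t₀..t, a s with hA_def
  have hA_deriv : ∀ t, HasDerivAt A (a t) t := fun t =>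
    intervalIntegral.integral_hasDerivAt_right (ha_cont.intervalIntegrable _ _)
      ha_cont.aestronglyMeasurable.stronglyMeasurableAtFilter ha_cont.continuousAt
  have hA_cont : Continuous A :=
    continuous_iff_continuousAt.2 fun t => (hA_deriv t).continuousAt
  have hA0 : A t₀ = 0 := intervalIntegral.integral_same
  have hAt_lb : ∀ t, t₀ ≤ t → α * (t - t₀) ≤ A t := by
    intro t ht
    have h1 : (∫ s in t₀..t, (α : ℝ)) ≤ ∫ s in t₀..t, a s :=
      intervalIntegral.integral_mono_on ht (intervalIntegrable_const)
        (ha_cont.intervalIntegrable _ _) (fun s _ => hα s)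
    simpa [mul_comm] using h1
  constructor
  · -- EXISTENCE
    set P : ℝ → ℝ := fun t => u₀⁻¹ + ∫ s in t₀..t, b s * Real.exp (A s) with hP_def
    have hg_cont : Continuous (fun s => b s * Real.exp (A s)) :=
      hb_cont.mul (Real.continuous_exp.comp hA_cont)
    have hP_deriv : ∀ t, HasDerivAt P (b t * Real.exp (A t)) t := fun t =>
      (intervalIntegral.integral_hasDerivAt_right (hg_cont.intervalIntegrable _ _)
        hg_cont.aestronglyMeasurable.stronglyMeasurableAtFilter hg_cont.continuousAt).const_add _
    set v : ℝ → ℝ := fun t => Real.exp (-A t) * P t with hv_def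
    have hv_pos : ∀ t, t₀ ≤ t → 0 < v t := by
      intro t ht
      have h1 : 0 ≤ ∫ s in t₀..t, b s * Real.exp (A s) :=
        intervalIntegral.integral_nonneg ht
          (fun s _ => mul_nonneg (hb_pos s).le (Real.exp_pos _).le)
      have h2 : 0 < P t := by
        have : 0 < u₀⁻¹ := inv_pos.2 hu₀
        simp only [hP_def]; linarith
      exact mul_pos (Real.exp_pos _) h2
    have hv_deriv : ∀ t, HasDerivAt v (b t - a t * v t) t := by
      intro t
      have h1 : HasDerivAt (fun s => Real.exp (-A s)) (Real.exp (-A t) * (-(a t))) t :=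
        ((hA_deriv t).neg).exp
      have h2 := h1.mul (hP_deriv t)
      have h3 : Real.exp (-A t) * Real.exp (A t) = 1 := by
        rw [← Real.exp_add]; simp
      have h4 := alg4 (Real.exp (-A t)) (Real.exp (A t)) (P t) (a t) (b t) h3
      rw [h4] at h2
      exact h2
    refine ⟨fun t => (v t)⁻¹, ?_, ?_⟩
    · simp [hv_def, hP_def, hA0, intervalIntegral.integral_same]
    · intro t ht
      have hvne : v t ≠ 0 := (hv_pos t ht).ne'
      have h3 := (hv_deriv t).inv hvne
      rw [alg1 (v t) (a t) (b t) hvne] at h3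
      exact h3.hasDerivWithinAt
  · -- ATTRACTION
    intro w hw0 hw
    have hw_contOn : ContinuousOn w (Ici t₀) := fun t ht => (hw t ht).continuousWithinAt
    -- positivity of w on [t₀, ∞)
    have hw_pos : ∀ t, t₀ ≤ t → 0 < w t := by
      by_contra hcon
      push_neg at hcon
      obtain ⟨t₂, ht₂, hwt₂⟩ := hcon
      set S : Set ℝ := {s ∈ Icc t₀ t₂ | w s ≤ 0} with hS_def
      have hS_closed : IsClosed S := by
        have := (hw_contOn.mono (Icc_subset_Ici_self (a := t₂) (b := t₀))).preimage_isClosed_of_isClosed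
          isClosed_Icc (isClosed_Iic (a := (0:ℝ)))
        convert this using 1
        rfl
      have hS_ne : S.Nonempty := ⟨t₂, ⟨ht₂, le_refl _⟩, hwt₂⟩
      have hS_bdd : BddBelow S := ⟨t₀, fun s hs => hs.1.1⟩
      set t₁ := sInf S with ht₁_def
      have ht₁S : t₁ ∈ S := hS_closed.csInf_mem hS_ne hS_bdd
      have ht₀₁ : t₀ ≤ t₁ := ht₁S.1.1
      have hw_pos' : ∀ s ∈ Ico t₀ t₁, 0 < w s := by
        intro s hs
        by_contra h
        push_neg at h
        have hsS : s ∈ S := ⟨⟨hs.1, hs.2.le.trans ht₁S.1.2⟩, h⟩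
        exact absurd (csInf_le hS_bdd hsS) (not_le.2 hs.2)
      obtain ⟨x₀, -, hKmax⟩ := isCompact_Icc.exists_isMaxOn (Set.nonempty_Icc.2 ht₀₁)
        (((hb_cont.continuousOn.mul (hw_contOn.mono
          (Icc_subset_Ici_self (a := t₁) (b := t₀)))).sub ha_cont.continuousOn))
      have hK : ∀ s ∈ Icc t₀ t₁, b s * w s - a s ≤ b x₀ * w x₀ - a x₀ :=
        fun s hs => hKmax hs
      set K : ℝ := max (b x₀ * w x₀ - a x₀) 0 with hK_def
      have hK' : ∀ s ∈ Icc t₀ t₁, b s * w s - a s ≤ K := fun s hs =>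
        (hK s hs).trans (le_max_left _ _)
      have hK0 : 0 ≤ K := le_max_right _ _
      set h : ℝ → ℝ := fun s => w s * Real.exp (K * s) with hh_def
      have hmono : MonotoneOn h (Icc t₀ t₁) := by
        apply monotoneOn_of_hasDerivWithinAt_nonneg (convex_Icc t₀ t₁)
          (f' := fun x => Real.exp (K * x) * (w x * (a x - b x * w x + K)))
        · exact (hw_contOn.mono (Icc_subset_Ici_self)).mul
            (Real.continuous_exp.comp (continuous_const.mul continuous_id)).continuousOn
        · intro x hx
          rw [interior_Icc] at hx
          have hxI : t₀ ≤ x := hx.1.le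
          have hw' : HasDerivAt w (w x * (a x - b x * w x)) x :=
            (hw x hxI).hasDerivAt (Ici_mem_nhds hx.1)
          have he : HasDerivAt (fun s : ℝ => Real.exp (K * s)) (Real.exp (K * x) * K) x := by
            have : HasDerivAt (fun s : ℝ => K * s) K x := by
              simpa using (hasDerivAt_id x).const_mul K
            exact this.exp
          have := hw'.mul he
          have heq : w x * (a x - b x * w x) * Real.exp (K * x) + w x * (Real.exp (K * x) * K)
              = Real.exp (K * x) * (w x * (a x - b x * w x + K)) := by ring
          rw [heq] at this
          exact this.hasDerivWithinAt
        · intro x hx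
          rw [interior_Icc] at hx
          have hwx : 0 < w x := hw_pos' x ⟨hx.1.le, hx.2⟩
          have h1 : 0 ≤ a x - b x * w x + K := by
            have := hK' x ⟨hx.1.le, hx.2.le⟩
            linarith
          positivity
      have h1 : h t₀ ≤ h t₁ := hmono ⟨le_refl _, ht₀₁⟩ ⟨ht₀₁, le_refl _⟩ ht₀₁
      have h2 : 0 < h t₀ := by
        simp only [hh_def, hw0]
        positivity
      have h3 : h t₁ ≤ 0 := mul_nonpos_of_nonpos_of_nonneg ht₁S.2 (Real.exp_pos _).le
      linarith
    -- upper bound for w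
    set C : ℝ := max u₀ (mA / β) with hC_def
    have hC_u₀ : u₀ ≤ C := le_max_left _ _
    have hC_pos : 0 < C := lt_of_lt_of_le hu₀ hC_u₀
    have hβC : mA ≤ β * C := by
      have h1 : mA / β ≤ C := le_max_right _ _
      calc mA = β * (mA / β) := by field_simp
        _ ≤ β * C := by exact mul_le_mul_of_nonneg_left h1 hb_inf_pos.le
    have hw_le : ∀ t, t₀ ≤ t → w t ≤ C := by
      by_contra hcon
      push_neg at hcon
      obtain ⟨t₂, ht₂, hC2⟩ := hcon
      set S : Set ℝ := {s ∈ Icc t₀ t₂ | w s ≤ C} with hS_def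
      have hS_closed : IsClosed S := by
        have := (hw_contOn.mono (Icc_subset_Ici_self (a := t₂) (b := t₀))).preimage_isClosed_of_isClosed
          isClosed_Icc (isClosed_Iic (a := C))
        convert this using 1
        rfl
      have hS_ne : S.Nonempty := ⟨t₀, ⟨le_refl _, ht₂⟩, hw0 ▸ hC_u₀⟩
      have hS_bdd : BddAbove S := ⟨t₂, fun s hs => hs.1.2⟩
      set t₁ := sSup S with ht₁_def
      have ht₁S : t₁ ∈ S := hS_closed.csSup_mem hS_ne hS_bdd
      have ht₀₁ : t₀ ≤ t₁ := ht₁S.1.1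
      have ht₁₂ : t₁ ≤ t₂ := ht₁S.1.2
      have hgt : ∀ s ∈ Ioc t₁ t₂, C < w s := by
        intro s hs
        by_contra hle
        push_neg at hle
        have hsS : s ∈ S := ⟨⟨ht₀₁.trans hs.1.le, hs.2⟩, hle⟩
        exact absurd (le_csSup hS_bdd hsS) (not_le.2 hs.1)
      have hanti : AntitoneOn w (Icc t₁ t₂) := by
        apply antitoneOn_of_hasDerivWithinAt_nonpos (convex_Icc t₁ t₂)
          (f' := fun x => w x * (a x - b x * w x))
        · exact hw_contOn.mono (fun x hx => ht₀₁.trans hx.1)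
        · intro x hx
          rw [interior_Icc] at hx
          exact ((hw x (ht₀₁.trans hx.1.le)).hasDerivAt
            (Ici_mem_nhds (lt_of_le_of_lt ht₀₁ hx.1))).hasDerivWithinAt
        · intro x hx
          rw [interior_Icc] at hx
          have hwx : C < w x := hgt x ⟨hx.1, hx.2.le⟩
          have hwx0 : 0 < w x := hC_pos.trans hwx
          have h1 : a x - b x * w x ≤ 0 := by
            have h2 : β * C ≤ b x * w x := by
              calc β * C ≤ β * w x := mul_le_mul_of_nonneg_left hwx.le hb_inf_pos.le
                _ ≤ b x * w x := mul_le_mul_of_nonneg_right (hβ x) hwx0.le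
            have := hamA x
            linarith
          exact mul_nonpos_of_nonneg_of_nonpos hwx0.le h1
      have : w t₂ ≤ w t₁ := hanti ⟨le_refl _, ht₁₂⟩ ⟨ht₁₂, le_refl _⟩ ht₁₂
      have := ht₁S.2
      linarith
    -- the reciprocals
    set v : ℝ → ℝ := fun t => (w t)⁻¹ with hv_def
    set z : ℝ → ℝ := fun t => (ustar t)⁻¹ with hz_def
    have hz_deriv : ∀ t, HasDerivAt z (b t - a t * z t) t := by
      intro t
      have h1 := (hstar_deriv t).inv (hustar_pos t).ne'
      rwa [alg2 (ustar t) (a t) (b t) (hustar_pos t).ne'] at h1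
    -- the exponentially decaying difference
    have hd : ∀ T, t₀ ≤ T → (v T - z T) * Real.exp (A T) = v t₀ - z t₀ := by
      intro T hT
      have hcont : ContinuousOn (fun s => (v s - z s) * Real.exp (A s)) (Icc t₀ T) := by
        apply ContinuousOn.mul
        · apply ContinuousOn.sub
          · exact ((hw_contOn.mono Icc_subset_Ici_self).inv₀
              (fun x hx => (hw_pos x hx.1).ne'))
          · exact (hustar_cont.inv₀ (fun x => (hustar_pos x).ne')).continuousOn
        · exact (Real.continuous_exp.comp hA_cont).continuousOn
      have hderiv : ∀ x ∈ Ico t₀ T,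
          HasDerivWithinAt (fun s => (v s - z s) * Real.exp (A s)) 0 (Ici x) x := by
        intro x hx
        have hwx := (hw x hx.1).mono (Ici_subset_Ici.2 hx.1)
        have hwne : w x ≠ 0 := (hw_pos x hx.1).ne'
        have hvx : HasDerivWithinAt v (b x - a x * v x) (Ici x) x := by
          have h1 := hwx.inv hwne
          rwa [alg2 (w x) (a x) (b x) hwne] at h1
        have hzx := (hz_deriv x).hasDerivWithinAt (s := Ici x)
        have hex : HasDerivWithinAt (fun s => Real.exp (A s)) (Real.exp (A x) * a x)
            (Ici x) x := ((hA_deriv x).exp).hasDerivWithinAt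
        have := (hvx.sub hzx).mul hex
        have heq : (b x - a x * v x - (b x - a x * z x)) * Real.exp (A x)
            + (v x - z x) * (Real.exp (A x) * a x) = 0 := by ring
        simp only [Pi.sub_apply] at this
        rwa [heq] at this
      have hconst := constant_of_has_deriv_right_zero hcont hderiv T ⟨hT, le_refl _⟩
      simpa [hA0] using hconst
    -- the quantitative bound
    have key : ∀ t, t₀ ≤ t →
        |w t - ustar t| ≤ C * Ms * |v t₀ - z t₀| * Real.exp (-(α * (t - t₀))) := by
      intro t ht
      have hwt := hw_pos t ht
      have hut := hustar_pos t
      have h1 : v t - z t = (v t₀ - z t₀) * Real.exp (-A t) := by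
        have h2 := hd t ht
        rw [Real.exp_neg, eq_mul_inv_iff_mul_eq₀ (Real.exp_ne_zero _)]
        exact h2
      have h2 : w t - ustar t = w t * ustar t * (v t - z t) * (-1) :=
        alg3 (w t) (ustar t) hwt.ne' hut.ne'
      have hL : |w t - ustar t| = w t * ustar t * |v t₀ - z t₀| * Real.exp (-A t) := by
        rw [h2, abs_mul, abs_mul, abs_mul, h1, abs_mul]
        rw [abs_of_pos hwt, abs_of_pos hut, abs_of_pos (Real.exp_pos _)]
        simp [mul_assoc]
      rw [hL]
      have hexp : Real.exp (-A t) ≤ Real.exp (-(α * (t - t₀))) :=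
        Real.exp_le_exp.2 (neg_le_neg (hAt_lb t ht))
      have e1 : w t * ustar t ≤ C * Ms := mul_le_mul (hw_le t ht) (hMs t) hut.le hC_pos.le
      calc w t * ustar t * |v t₀ - z t₀| * Real.exp (-A t)
          ≤ C * Ms * |v t₀ - z t₀| * Real.exp (-A t) :=
            mul_le_mul_of_nonneg_right (mul_le_mul_of_nonneg_right e1 (abs_nonneg _))
              (Real.exp_pos _).le
        _ ≤ C * Ms * |v t₀ - z t₀| * Real.exp (-(α * (t - t₀))) :=
            mul_le_mul_of_nonneg_left hexp
              (mul_nonneg (mul_nonneg hC_pos.le hMs_pos.le) (abs_nonneg _))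
    -- conclusion
    have hlim : Tendsto (fun t : ℝ => C * Ms * |v t₀ - z t₀| * Real.exp (-(α * t)))
        atTop (nhds 0) := by
      have h2 : Tendsto (fun t : ℝ => α * t) atTop atTop :=
        Tendsto.const_mul_atTop ha_inf_pos tendsto_id
      have h3 : Tendsto (fun t : ℝ => Real.exp (-(α * t))) atTop (nhds 0) :=
        Real.tendsto_exp_neg_atTop_nhds_zero.comp h2
      simpa using h3.const_mul (C * Ms * |v t₀ - z t₀|)
    apply squeeze_zero' (Filter.Eventually.of_forall (fun t => abs_nonneg _)) _ hlim
    filter_upwards [eventually_ge_atTop 0] with t ht0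
    have hkey := key (t + t₀) (by linarith)
    simpa using hkey
end

section
/- If in addition a and b are periodic with period T > 0 (i.e. a(t+T) = a(t) and b(t+T) = b(t) for all t), then the unique bounded entire solution u* with inf_{t∈ℝ} u*(t) > 0 is also periodic with period T; and if a and b are almost periodic, then u* is almost periodic. -/
open Real

/-- A continuous function `f : ℝ → ℝ` is (Bohr) almost periodic: for every `ε > 0` the set of
`ε`-periods of `f` is relatively dense in `ℝ`. -/
def BohrAlmostPeriodic (f : ℝ → ℝ) : Prop :=
  Continuous f ∧
    ∀ ε > 0, ∃ l > 0, ∀ s : ℝ, ∃ τ ∈ Set.Icc s (s + l), ∀ t : ℝ, |f (t + τ) - f t| < ε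


lemma hinge_hasDerivAt (c : ℝ) : HasDerivAt (fun y : ℝ => (max y 0)^2) (2 * max c 0) c := by
  rcases lt_trichotomy c 0 with h | h | h
  · have heq : (fun y : ℝ => (max y 0)^2) =ᶠ[nhds c] (fun _ => (0:ℝ)) := by
      filter_upwards [eventually_lt_nhds h] with y hy
      simp [max_eq_right hy.le]
    rw [max_eq_right h.le]
    simpa using (hasDerivAt_const c (0:ℝ)).congr_of_eventuallyEq heq
  · subst h
    rw [max_self]
    rw [hasDerivAt_iff_isLittleO]
    simp only [mul_zero, zero_mul, sub_zero, smul_zero]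
    have h1 : (fun y : ℝ => (max y 0)^2) =O[nhds 0] (fun y => y^2) := by
      apply Asymptotics.IsBigO.of_bound 1
      filter_upwards with y
      have hle : |max y 0| ≤ |y| := by
        rcases le_or_gt y 0 with hy | hy
        · simp [max_eq_right hy]
        · simp [max_eq_left hy.le]
      have h3 : |max y 0|^2 ≤ |y|^2 := pow_le_pow_left₀ (abs_nonneg _) hle 2
      calc ‖(max y 0)^2‖ = |max y 0|^2 := by rw [Real.norm_eq_abs, abs_pow]
        _ ≤ |y|^2 := h3
        _ = 1 * ‖y^2‖ := by rw [Real.norm_eq_abs, abs_pow, one_mul]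
    have h2 : (fun y : ℝ => y^2) =o[nhds 0] (fun y => y) := by
      rw [Asymptotics.isLittleO_iff]
      intro c hc
      have hev : ∀ᶠ y : ℝ in nhds 0, |y| < c := by
        filter_upwards [Metric.ball_mem_nhds (0:ℝ) hc] with y hy
        simpa [Real.dist_eq] using hy
      filter_upwards [hev] with y hy
      simp only [Real.norm_eq_abs, sq, abs_mul]
      exact mul_le_mul_of_nonneg_right hy.le (abs_nonneg _)
    simpa using h1.trans_isLittleO h2
  · have heq : (fun y : ℝ => (max y 0)^2) =ᶠ[nhds c] (fun y => y^2) := by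
      filter_upwards [eventually_gt_nhds h] with y hy
      simp [max_eq_left hy.le]
    rw [max_eq_left h.le]
    have h2 : HasDerivAt (fun y : ℝ => y^2) (2*c) c := by
      simpa using (hasDerivAt_pow 2 c)
    exact h2.congr_of_eventuallyEq heq

/-- Key comparison lemma: one-sided log estimate between two bounded positive solutions of
(possibly different) logistic equations. -/
lemma logistic_key (a1 b1 a2 b2 u v : ℝ → ℝ) (m Mu b0 ε : ℝ)
    (hm : 0 < m) (hb0 : 0 < b0) (hε : 0 ≤ ε)
    (hu : ∀ t, HasDerivAt u (u t * (a1 t - b1 t * u t)) t)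
    (hv : ∀ t, HasDerivAt v (v t * (a2 t - b2 t * v t)) t)
    (hum : ∀ t, m ≤ u t) (huM : ∀ t, u t ≤ Mu)
    (hvm : ∀ t, m ≤ v t) (hvM : ∀ t, v t ≤ Mu)
    (hb1 : ∀ t, b0 ≤ b1 t)
    (hE : ∀ t, (a1 t - a2 t) + (b2 t - b1 t) * v t ≤ ε) :
    ∀ t, Real.log (u t) - Real.log (v t) ≤ ε / (b0 * m) := by
  set c0 : ℝ := b0 * m with hc0def
  have hc0 : 0 < c0 := mul_pos hb0 hm
  set θ : ℝ := ε / c0 with hθdef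
  have hθ : 0 ≤ θ := div_nonneg hε hc0.le
  have hupos : ∀ t, 0 < u t := fun t => lt_of_lt_of_le hm (hum t)
  have hvpos : ∀ t, 0 < v t := fun t => lt_of_lt_of_le hm (hvm t)
  set w : ℝ → ℝ := fun t => Real.log (u t) - Real.log (v t) with hwdef
  set w' : ℝ → ℝ := fun t => (a1 t - b1 t * u t) - (a2 t - b2 t * v t) with hw'def
  have hw : ∀ t, HasDerivAt w (w' t) t := by
    intro t
    have h1 := ((hu t).log (hupos t).ne')
    have h2 := ((hv t).log (hvpos t).ne')
    have h3 := h1.sub h2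
    have heq : u t * (a1 t - b1 t * u t) / u t - v t * (a2 t - b2 t * v t) / v t = w' t := by
      rw [mul_div_cancel_left₀ _ (hupos t).ne', mul_div_cancel_left₀ _ (hvpos t).ne']
    exact heq ▸ h3
  set V : ℝ → ℝ := fun t => (max (w t - θ) 0)^2 with hVdef
  set V' : ℝ → ℝ := fun t => 2 * max (w t - θ) 0 * w' t with hV'def
  have hV : ∀ t, HasDerivAt V (V' t) t := by
    intro t
    exact (hinge_hasDerivAt (w t - θ)).comp t ((hw t).sub_const θ)
  -- pointwise differential inequality
  have hineq : ∀ t, V' t ≤ -(2 * c0) * V t := by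
    intro t
    rcases le_or_gt (w t) θ with h | h
    · have hmx : max (w t - θ) 0 = 0 := max_eq_right (by linarith)
      show 2 * max (w t - θ) 0 * w' t ≤ -(2*c0) * (max (w t - θ) 0)^2
      rw [hmx]; ring_nf; simp
    · have hx : max (w t - θ) 0 = w t - θ := max_eq_left (by linarith)
      have hwpos : 0 < w t := lt_of_le_of_lt hθ h
      -- u t - v t ≥ v t * w t ≥ m * w t
      have hexp : w t + 1 ≤ u t / v t := by
        have : Real.exp (w t) = u t / v t := by
          rw [hwdef]
          rw [Real.exp_sub, Real.exp_log (hupos t), Real.exp_log (hvpos t)]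
        rw [← this]
        exact Real.add_one_le_exp (w t)
      have huv : v t * w t ≤ u t - v t := by
        have h1 : v t * (w t + 1) ≤ v t * (u t / v t) :=
          mul_le_mul_of_nonneg_left hexp (hvpos t).le
        rw [mul_div_cancel₀ _ (hvpos t).ne'] at h1
        nlinarith
      have huv2 : m * w t ≤ u t - v t := by nlinarith [hvm t]
      have huvnn : 0 ≤ u t - v t := le_trans (by positivity) huv2
      have hb : c0 * w t ≤ b1 t * (u t - v t) := by
        calc c0 * w t = b0 * (m * w t) := by ring
          _ ≤ b0 * (u t - v t) := mul_le_mul_of_nonneg_left huv2 hb0.le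
          _ ≤ b1 t * (u t - v t) := mul_le_mul_of_nonneg_right (hb1 t) huvnn
      have hw'le : w' t ≤ ε - c0 * w t := by
        have hE' := hE t
        have : w' t = ((a1 t - a2 t) + (b2 t - b1 t) * v t) - b1 t * (u t - v t) := by
          rw [hw'def]; ring
        rw [this]
        linarith
      have hcθ : c0 * θ = ε := by
        rw [hθdef]; field_simp
      have hfinal : w' t ≤ -c0 * (w t - θ) := by
        have : ε - c0 * w t = -c0 * (w t - θ) := by rw [← hcθ]; ring
        linarith [hw'le, this.le, this.ge]
      show 2 * max (w t - θ) 0 * w' t ≤ -(2*c0) * (max (w t - θ) 0)^2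
      rw [hx]
      have h2x : 0 ≤ 2 * (w t - θ) := by linarith
      calc 2 * (w t - θ) * w' t ≤ 2 * (w t - θ) * (-c0 * (w t - θ)) :=
            mul_le_mul_of_nonneg_left hfinal h2x
        _ = -(2*c0) * (w t - θ)^2 := by ring
  -- boundedness of V
  set K : ℝ := (Real.log Mu - Real.log m)^2 with hKdef
  have hmMu : m ≤ Mu := le_trans (hum 0) (huM 0)
  have hVK : ∀ t, V t ≤ K := by
    intro t
    have hwle : w t ≤ Real.log Mu - Real.log m := by
      have h1 : Real.log (u t) ≤ Real.log Mu := Real.log_le_log (hupos t) (huM t)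
      have h2 : Real.log m ≤ Real.log (v t) := Real.log_le_log hm (hvm t)
      show Real.log (u t) - Real.log (v t) ≤ Real.log Mu - Real.log m
      linarith
    have hlognn : 0 ≤ Real.log Mu - Real.log m := by
      have := Real.log_le_log hm hmMu; linarith
    have : max (w t - θ) 0 ≤ Real.log Mu - Real.log m := by
      apply max_le (by linarith) hlognn
    calc V t = (max (w t - θ) 0)^2 := rfl
      _ ≤ (Real.log Mu - Real.log m)^2 := pow_le_pow_left₀ (le_max_right _ _) this 2
  -- Gronwall: G = V * exp(2 c0 t) is antitone
  set G : ℝ → ℝ := fun t => V t * Real.exp (2 * c0 * t) with hGdef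
  have hG : ∀ t, HasDerivAt G (V' t * Real.exp (2*c0*t) + V t * (2*c0 * Real.exp (2*c0*t))) t := by
    intro t
    have he : HasDerivAt (fun t : ℝ => Real.exp (2*c0*t)) (2*c0 * Real.exp (2*c0*t)) t := by
      have h0 : HasDerivAt (fun t : ℝ => 2*c0*t) (2*c0) t := by
        simpa using (hasDerivAt_id t).const_mul (2*c0)
      simpa [mul_comm] using h0.exp
    exact (hV t).mul he
  have hGanti : Antitone G := by
    apply antitone_of_deriv_nonpos
    · intro t; exact (hG t).differentiableAt
    · intro t
      rw [(hG t).deriv]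
      have h1 := hineq t
      have hexppos : 0 < Real.exp (2*c0*t) := Real.exp_pos _
      nlinarith [mul_le_mul_of_nonneg_right h1 hexppos.le]
  -- conclude V ≡ 0 region: V t ≤ K * (exp(-(2 c0)))^n for all n
  have hVbound : ∀ t, ∀ n : ℕ, V t ≤ K * (Real.exp (-(2*c0)))^n := by
    intro t n
    have h1 : G t ≤ G (t - n) := hGanti (by linarith [Nat.cast_nonneg (α := ℝ) n])
    have hexppos : 0 < Real.exp (2*c0*t) := Real.exp_pos _
    have h2 : V t * Real.exp (2*c0*t) ≤ K * Real.exp (2*c0*(t - n)) := by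
      calc V t * Real.exp (2*c0*t) = G t := rfl
        _ ≤ G (t - n) := h1
        _ = V (t-n) * Real.exp (2*c0*(t-n)) := rfl
        _ ≤ K * Real.exp (2*c0*(t-n)) :=
            mul_le_mul_of_nonneg_right (hVK _) (Real.exp_pos _).le
    have h3 : Real.exp (2*c0*(t - n)) = Real.exp (2*c0*t) * (Real.exp (-(2*c0)))^n := by
      rw [← Real.exp_nat_mul, ← Real.exp_add]
      ring_nf
    rw [h3] at h2
    have := (mul_le_mul_iff_of_pos_right hexppos).mp (by linarith [h2] : V t * Real.exp (2*c0*t) ≤ (K * (Real.exp (-(2*c0)))^n) * Real.exp (2*c0*t))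
    exact this
  have hV0 : ∀ t, V t ≤ 0 := by
    intro t
    have htend : Filter.Tendsto (fun n : ℕ => K * (Real.exp (-(2*c0)))^n) Filter.atTop (nhds 0) := by
      have h1 : Filter.Tendsto (fun n : ℕ => (Real.exp (-(2*c0)))^n) Filter.atTop (nhds 0) :=
        tendsto_pow_atTop_nhds_zero_of_lt_one (Real.exp_pos _).le
          (Real.exp_lt_one_iff.mpr (by linarith))
      simpa using h1.const_mul K
    exact ge_of_tendsto' htend (hVbound t)
  intro t
  have : max (w t - θ) 0 = 0 := by
    have h1 : (max (w t - θ) 0)^2 ≤ 0 := hV0 t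
    have h2 : 0 ≤ max (w t - θ) 0 := le_max_right _ _
    nlinarith
  have h2 := le_max_left (w t - θ) 0
  rw [this] at h2
  have hfin : w t ≤ θ := by linarith
  exact hfin
/-- An almost periodic function is uniformly continuous. -/
lemma BohrAlmostPeriodic.unifCont {f : ℝ → ℝ} (hf : BohrAlmostPeriodic f) :
    ∀ ε > 0, ∃ δ > 0, ∀ x y : ℝ, |x - y| < δ → |f x - f y| < ε := by
  intro ε hε
  obtain ⟨l, hl, H⟩ := hf.2 (ε/3) (by positivity)
  have hK : UniformContinuousOn f (Set.Icc (-1 : ℝ) (l+1)) :=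
    isCompact_Icc.uniformContinuousOn_of_continuous hf.1.continuousOn
  obtain ⟨δ', hδ', hδ'p⟩ := Metric.uniformContinuousOn_iff.mp hK (ε/3) (by positivity)
  refine ⟨min δ' 1, by positivity, fun x y hxy => ?_⟩
  obtain ⟨τ, hτmem, hτ⟩ := H (-x)
  have hx1 : x + τ ∈ Set.Icc (0:ℝ) l := by
    obtain ⟨h1, h2⟩ := hτmem
    constructor <;> linarith
  have hxy1 : |x - y| < 1 := lt_of_lt_of_le hxy (min_le_right _ _)
  have hxK : x + τ ∈ Set.Icc (-1:ℝ) (l+1) := by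
    obtain ⟨h1, h2⟩ := hx1; constructor <;> linarith
  have hyK : y + τ ∈ Set.Icc (-1:ℝ) (l+1) := by
    obtain ⟨h1, h2⟩ := hx1
    have := abs_lt.mp hxy1
    constructor <;> [linarith [this.2]; linarith [this.1]]
  have hmid : |f (x + τ) - f (y + τ)| < ε/3 := by
    have := hδ'p (x+τ) hxK (y+τ) hyK (by
      rw [Real.dist_eq]
      have : x + τ - (y + τ) = x - y := by ring
      rw [this]
      exact lt_of_lt_of_le hxy (min_le_left _ _))
    simpa [Real.dist_eq] using this
  have h1 := hτ x
  have h2 := hτ y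
  have e1 : |f x - f (x+τ)| < ε/3 := by rw [abs_sub_comm]; exact h1
  have e2 : |f (y+τ) - f y| < ε/3 := h2
  calc |f x - f y| = |(f x - f (x+τ)) + (f (x+τ) - f (y+τ)) + (f (y+τ) - f y)| := by ring_nf
    _ ≤ |f x - f (x+τ)| + |f (x+τ) - f (y+τ)| + |f (y+τ) - f y| := by
        exact (abs_add_three _ _ _)
    _ < ε/3 + ε/3 + ε/3 := by linarith [hmid]
    _ = ε := by ring


/-- From "every interval of every length contains a Bad point centered appropriately",
construct a sequence whose pairwise differences are all Bad. -/
lemma bad_seq (Bad : ℝ → Prop)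
    (Hbad : ∀ L : ℝ, 0 < L → ∃ s : ℝ, ∀ τ ∈ Set.Icc s (s + L), Bad τ) :
    ∃ S : ℕ → ℝ, ∀ i j : ℕ, i < j → Bad (S j - S i) := by
  have step : ∀ M : ℝ, ∃ s' : ℝ, ∀ x : ℝ, |x| ≤ |M| → Bad (s' - x) := by
    intro M
    obtain ⟨s₀, hs₀⟩ := Hbad (2*(|M|+1)) (by positivity)
    refine ⟨s₀ + |M| + 1, fun x hx => ?_⟩
    apply hs₀
    have h1 := abs_le.mp hx
    constructor <;> [linarith [h1.2]; linarith [h1.1]]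
  choose st hst using step
  -- seq n = (S n, M n) with M n ≥ max |S i| for i ≤ n and M nonneg monotone
  let seq : ℕ → ℝ × ℝ := fun n => Nat.rec (st 0, |st 0|)
    (fun _ p => (st p.2, max p.2 |st p.2|)) n
  have hseq_succ : ∀ n, seq (n+1) = (st (seq n).2, max (seq n).2 |st (seq n).2|) := fun n => rfl
  have habs : ∀ n, |(seq n).1| ≤ (seq n).2 := by
    intro n
    cases n with
    | zero => exact le_refl _
    | succ k => rw [hseq_succ]; exact le_max_right _ _
  have hnn : ∀ n, 0 ≤ (seq n).2 := fun n => le_trans (abs_nonneg _) (habs n)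
  have hmono : Monotone (fun n => (seq n).2) := by
    apply monotone_nat_of_le_succ
    intro n
    rw [hseq_succ]
    exact le_max_left _ _
  refine ⟨fun n => (seq n).1, fun i j hij => ?_⟩
  obtain ⟨k, rfl⟩ : ∃ k, j = k + 1 := ⟨j - 1, by omega⟩
  have h1 : |(seq i).1| ≤ |(seq k).2| := by
    rw [abs_of_nonneg (hnn k)]
    exact le_trans (habs i) (hmono (by omega : i ≤ k))
  have := hst (seq k).2 (seq i).1 h1
  show Bad ((seq (k+1)).1 - (seq i).1)
  rw [hseq_succ]
  exact this
/-- Two almost periodic functions have relatively dense COMMON almost periods. -/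
lemma common_periods {f g : ℝ → ℝ} (hf : BohrAlmostPeriodic f) (hg : BohrAlmostPeriodic g) :
    ∀ ε > 0, ∃ l > 0, ∀ s : ℝ, ∃ τ ∈ Set.Icc s (s + l),
      (∀ t, |f (t + τ) - f t| < ε) ∧ (∀ t, |g (t + τ) - g t| < ε) := by
  intro ε hε
  by_contra hcon
  have Hbad : ∀ L : ℝ, 0 < L → ∃ s, ∀ τ ∈ Set.Icc s (s + L),
      ¬((∀ t, |f (t + τ) - f t| < ε) ∧ (∀ t, |g (t + τ) - g t| < ε)) := by
    intro L hL
    by_contra h2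
    push_neg at h2
    exact hcon ⟨L, hL, h2⟩
  obtain ⟨S, hS⟩ := bad_seq _ Hbad
  set ε' : ℝ := ε/4 with hε'def
  have hε' : 0 < ε' := by positivity
  obtain ⟨lf, hlf, Hf⟩ := hf.2 ε' hε'
  obtain ⟨lg, hlg, Hg⟩ := hg.2 ε' hε'
  obtain ⟨δf, hδf, Uf⟩ := hf.unifCont ε' hε'
  obtain ⟨δg, hδg, Ug⟩ := hg.unifCont ε' hε'
  choose τf hτfmem hτf using fun n => Hf (-(S n))
  choose τg hτgmem hτg using fun n => Hg (-(S n))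
  set rf : ℕ → ℝ := fun n => S n + τf n with hrfdef
  set rg : ℕ → ℝ := fun n => S n + τg n with hrgdef
  have hrf : ∀ n, rf n ∈ Set.Icc (0:ℝ) lf := by
    intro n
    obtain ⟨h1, h2⟩ := hτfmem n
    constructor <;> simp [hrfdef] <;> linarith
  have hrg : ∀ n, rg n ∈ Set.Icc (0:ℝ) lg := by
    intro n
    obtain ⟨h1, h2⟩ := hτgmem n
    constructor <;> simp [hrgdef] <;> linarith
  have hclosef : ∀ n t, |f (t + S n) - f (t + rf n)| < ε' := by
    intro n t
    have := hτf n (t + S n)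
    have heq : t + S n + τf n = t + rf n := by rw [hrfdef]; ring
    rw [heq] at this
    rw [abs_sub_comm]
    exact this
  have hcloseg : ∀ n t, |g (t + S n) - g (t + rg n)| < ε' := by
    intro n t
    have := hτg n (t + S n)
    have heq : t + S n + τg n = t + rg n := by rw [hrgdef]; ring
    rw [heq] at this
    rw [abs_sub_comm]
    exact this
  -- pigeonhole
  set Nf : ℕ := ⌊lf/δf⌋₊ + 1 with hNfdef
  set Ng : ℕ := ⌊lg/δg⌋₊ + 1 with hNgdef
  set kf : ℕ → ℕ := fun n => ⌊rf n / δf⌋₊ with hkfdef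
  set kg : ℕ → ℕ := fun n => ⌊rg n / δg⌋₊ with hkgdef
  have hkf : ∀ n, kf n < Nf := by
    intro n
    have : rf n / δf ≤ lf / δf := div_le_div_of_nonneg_right (hrf n).2 hδf.le
    calc kf n ≤ ⌊lf/δf⌋₊ := Nat.floor_le_floor this
      _ < Nf := Nat.lt_succ_self _
  have hkg : ∀ n, kg n < Ng := by
    intro n
    have : rg n / δg ≤ lg / δg := div_le_div_of_nonneg_right (hrg n).2 hδg.le
    calc kg n ≤ ⌊lg/δg⌋₊ := Nat.floor_le_floor this
      _ < Ng := Nat.lt_succ_self _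
  have hpigeon : ∃ i ∈ Finset.range (Nf*Ng+1), ∃ j ∈ Finset.range (Nf*Ng+1),
      i ≠ j ∧ (kf i, kg i) = (kf j, kg j) := by
    apply Finset.exists_ne_map_eq_of_card_lt_of_maps_to (t := Finset.range Nf ×ˢ Finset.range Ng)
    · simp [Finset.card_range]
    · intro n _
      simp only [Finset.mem_product, Finset.mem_range]
      exact Finset.mem_product.mpr ⟨Finset.mem_range.mpr (hkf n), Finset.mem_range.mpr (hkg n)⟩
  obtain ⟨i, -, j, -, hij, heq⟩ := hpigeon
  have hkfij : kf i = kf j := (Prod.mk.injEq _ _ _ _).mp heq |>.1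
  have hkgij : kg i = kg j := (Prod.mk.injEq _ _ _ _).mp heq |>.2
  -- same cell implies translates close
  have cell : ∀ (r : ℕ → ℝ) (δ : ℝ), 0 < δ → (∀ n, 0 ≤ r n) →
      (⌊r i / δ⌋₊ = ⌊r j / δ⌋₊) → |r i - r j| < δ := by
    intro r δ hδ hrnn hcell
    have h1 : (⌊r i / δ⌋₊ : ℝ) ≤ r i / δ := Nat.floor_le (div_nonneg (hrnn i) hδ.le)
    have h2 : r i / δ < ⌊r i / δ⌋₊ + 1 := Nat.lt_floor_add_one _
    have h3 : (⌊r j / δ⌋₊ : ℝ) ≤ r j / δ := Nat.floor_le (div_nonneg (hrnn j) hδ.le)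
    have h4 : r j / δ < ⌊r j / δ⌋₊ + 1 := Nat.lt_floor_add_one _
    rw [hcell] at h1 h2
    have b1 : (⌊r j / δ⌋₊ : ℝ) * δ ≤ r i := (le_div_iff₀ hδ).mp h1
    have b2 : r i < ((⌊r j / δ⌋₊ : ℝ) + 1) * δ := by
      have := (div_lt_iff₀ hδ).mp h2
      linarith [this]
    have b3 : (⌊r j / δ⌋₊ : ℝ) * δ ≤ r j := (le_div_iff₀ hδ).mp h3
    have b4 : r j < ((⌊r j / δ⌋₊ : ℝ) + 1) * δ := by
      have := (div_lt_iff₀ hδ).mp h4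
      linarith [this]
    rw [abs_sub_lt_iff]
    constructor <;> nlinarith [b1, b2, b3, b4]
  have hrfij : |rf i - rf j| < δf := cell rf δf hδf (fun n => (hrf n).1) hkfij
  have hrgij : |rg i - rg j| < δg := cell rg δg hδg (fun n => (hrg n).1) hkgij
  -- chains
  have chainf : ∀ t, |f (t + S i) - f (t + S j)| < 3*ε' := by
    intro t
    have e1 := hclosef i t
    have e2 : |f (t + rf i) - f (t + rf j)| < ε' := by
      apply Uf
      have : t + rf i - (t + rf j) = rf i - rf j := by ring
      rw [this]; exact hrfij
    have e3 : |f (t + rf j) - f (t + S j)| < ε' := by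
      rw [abs_sub_comm]; exact hclosef j t
    calc |f (t + S i) - f (t + S j)|
        = |(f (t+S i) - f (t+rf i)) + (f (t+rf i) - f (t+rf j)) + (f (t+rf j) - f (t+S j))| := by
          ring_nf
      _ ≤ |f (t+S i) - f (t+rf i)| + |f (t+rf i) - f (t+rf j)| + |f (t+rf j) - f (t+S j)| :=
          abs_add_three _ _ _
      _ < 3*ε' := by linarith
  have chaing : ∀ t, |g (t + S i) - g (t + S j)| < 3*ε' := by
    intro t
    have e1 := hcloseg i t
    have e2 : |g (t + rg i) - g (t + rg j)| < ε' := by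
      apply Ug
      have : t + rg i - (t + rg j) = rg i - rg j := by ring
      rw [this]; exact hrgij
    have e3 : |g (t + rg j) - g (t + S j)| < ε' := by
      rw [abs_sub_comm]; exact hcloseg j t
    calc |g (t + S i) - g (t + S j)|
        = |(g (t+S i) - g (t+rg i)) + (g (t+rg i) - g (t+rg j)) + (g (t+rg j) - g (t+S j))| := by
          ring_nf
      _ ≤ |g (t+S i) - g (t+rg i)| + |g (t+rg i) - g (t+rg j)| + |g (t+rg j) - g (t+S j)| :=
          abs_add_three _ _ _
      _ < 3*ε' := by linarith
  -- contradiction with badness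
  have key : ∀ p q : ℕ, p < q →
      ((∀ t, |f (t + S p) - f (t + S q)| < 3*ε') ∧ (∀ t, |g (t + S p) - g (t + S q)| < 3*ε')) →
      False := by
    intro p q hpq ⟨cf, cg⟩
    apply hS p q hpq
    constructor
    · intro t
      have := cf (t - S p)
      have heq1 : t - S p + S p = t := by ring
      have heq2 : t - S p + S q = t + (S q - S p) := by ring
      rw [heq1, heq2] at this
      rw [abs_sub_comm] at this
      calc |f (t + (S q - S p)) - f t| < 3*ε' := this
        _ < ε := by rw [hε'def]; linarith
    · intro t
      have := cg (t - S p)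
      have heq1 : t - S p + S p = t := by ring
      have heq2 : t - S p + S q = t + (S q - S p) := by ring
      rw [heq1, heq2] at this
      rw [abs_sub_comm] at this
      calc |g (t + (S q - S p)) - g t| < 3*ε' := this
        _ < ε := by rw [hε'def]; linarith
  rcases hij.lt_or_gt with hlt | hlt
  · exact key i j hlt ⟨chainf, chaing⟩
  · refine key j i hlt ⟨fun t => ?_, fun t => ?_⟩
    · rw [abs_sub_comm]; exact chainf t
    · rw [abs_sub_comm]; exact chaing t

/-- If `a` and `b` are periodic with period `T > 0`, then the unique bounded
entire solution `u*` of the logistic equation with positive infimum is also `T`-periodic;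
and if `a` and `b` are almost periodic, then `u*` is almost periodic. -/
theorem logistic_entire_solution_periodic_and_almost_periodic
    (a b ustar : ℝ → ℝ)
    (ha_cont : Continuous a) (hb_cont : Continuous b)
    (ha_bddAbove : BddAbove (Set.range a)) (hb_bddAbove : BddAbove (Set.range b))
    (ha_inf_pos : 0 < ⨅ t, a t) (hb_inf_pos : 0 < ⨅ t, b t)
    (hstar : (∀ t, HasDerivAt ustar (ustar t * (a t - b t * ustar t)) t) ∧
      BddAbove (Set.range ustar) ∧ 0 < ⨅ t, ustar t) :
    (∀ T : ℝ, 0 < T →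
      ((∀ t, a (t + T) = a t) ∧ (∀ t, b (t + T) = b t)) →
      ∀ t, ustar (t + T) = ustar t) ∧
    ((BohrAlmostPeriodic a ∧ BohrAlmostPeriodic b) → BohrAlmostPeriodic ustar) := by
  obtain ⟨hderiv, hbddA, hinf⟩ := hstar
  -- constants
  have hbddB : BddBelow (Set.range ustar) := by
    by_contra h
    have h0 := Real.iInf_of_not_bddBelow h
    rw [h0] at hinf
    exact lt_irrefl 0 hinf
  have hbB : BddBelow (Set.range b) := by
    by_contra h
    have h0 := Real.iInf_of_not_bddBelow h
    rw [h0] at hb_inf_pos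
    exact lt_irrefl 0 hb_inf_pos
  set m : ℝ := ⨅ t, ustar t with hmdef
  have hm : 0 < m := hinf
  have hum : ∀ t, m ≤ ustar t := fun t => ciInf_le hbddB t
  set Mu : ℝ := ⨆ t, ustar t with hMudef
  have huM : ∀ t, ustar t ≤ Mu := fun t => le_ciSup hbddA t
  set b0 : ℝ := ⨅ t, b t with hb0def
  have hb0 : 0 < b0 := hb_inf_pos
  have hb1 : ∀ t, b0 ≤ b t := fun t => ciInf_le hbB t
  have hMum : m ≤ Mu := le_trans (hum 0) (huM 0)
  have hMu : 0 < Mu := lt_of_lt_of_le hm hMum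
  have hupos : ∀ t, 0 < ustar t := fun t => lt_of_lt_of_le hm (hum t)
  -- generic conversion from log bound to value bound
  have mono_exp : ∀ (θ x y : ℝ), 0 < x → 0 < y → Real.log x - Real.log y ≤ θ →
      x ≤ y * Real.exp θ := by
    intro θ x y hx hy h
    have h1 : Real.log x ≤ Real.log (y * Real.exp θ) := by
      rw [Real.log_mul hy.ne' (Real.exp_pos θ).ne', Real.log_exp]
      linarith
    calc x = Real.exp (Real.log x) := (Real.exp_log hx).symm
      _ ≤ Real.exp (Real.log (y * Real.exp θ)) := Real.exp_le_exp.mpr h1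
      _ = y * Real.exp θ := Real.exp_log (by positivity)
  constructor
  · -- periodic part
    rintro T hT ⟨hpa, hpb⟩ t
    set v : ℝ → ℝ := fun s => ustar (s + T) with hvdef
    have hv : ∀ s, HasDerivAt v (v s * (a s - b s * v s)) s := by
      intro s
      have h0 : HasDerivAt (fun s : ℝ => s + T) 1 s := (hasDerivAt_id s).add_const T
      have h1 := (hderiv (s + T)).comp s h0
      rw [mul_one] at h1
      have h2 : ustar (s + T) * (a (s + T) - b (s + T) * ustar (s + T))
          = v s * (a s - b s * v s) := by
        rw [hpa s, hpb s]
      rw [h2] at h1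
      exact h1
    have key1 := logistic_key a b a b ustar v m Mu b0 0 hm hb0 le_rfl hderiv hv
      hum huM (fun s => hum (s+T)) (fun s => huM (s+T)) hb1 (fun s => by simp)
    have key2 := logistic_key a b a b v ustar m Mu b0 0 hm hb0 le_rfl hv hderiv
      (fun s => hum (s+T)) (fun s => huM (s+T)) hum huM hb1 (fun s => by simp)
    have h1 := key1 t
    have h2 := key2 t
    rw [zero_div] at h1 h2
    have hlogeq : Real.log (v t) = Real.log (ustar t) := by linarith
    have : v t = ustar t := by
      calc v t = Real.exp (Real.log (v t)) := (Real.exp_log (hupos (t+T))).symm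
        _ = Real.exp (Real.log (ustar t)) := by rw [hlogeq]
        _ = ustar t := Real.exp_log (hupos t)
    exact this
  · -- almost periodic part
    rintro ⟨hAPa, hAPb⟩
    refine ⟨continuous_iff_continuousAt.mpr
      (fun t => (hderiv t).differentiableAt.continuousAt), ?_⟩
    intro ε hε
    -- pick δ
    have hcont : Filter.Tendsto (fun δ : ℝ => Mu * (Real.exp (δ * (1+Mu) / (b0*m)) - 1))
        (nhds 0) (nhds 0) := by
      have hc : Continuous (fun δ : ℝ => Mu * (Real.exp (δ * (1+Mu) / (b0*m)) - 1)) := by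
        continuity
      have h0 := hc.tendsto 0
      simpa using h0
    have hev : ∀ᶠ δ in nhds (0:ℝ), Mu * (Real.exp (δ * (1+Mu) / (b0*m)) - 1) < ε :=
      hcont.eventually (gt_mem_nhds hε)
    obtain ⟨r, hr, hball⟩ := Metric.eventually_nhds_iff.mp hev
    set δ : ℝ := r/2 with hδdef
    have hδ : 0 < δ := by positivity
    have hballδ : Mu * (Real.exp (δ * (1+Mu) / (b0*m)) - 1) < ε := by
      apply hball
      rw [Real.dist_eq]
      rw [hδdef]
      rw [sub_zero, abs_of_pos (by positivity : (0:ℝ) < r/2)]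
      linarith
    obtain ⟨l, hl, Hcp⟩ := common_periods hAPa hAPb δ hδ
    refine ⟨l, hl, fun s => ?_⟩
    obtain ⟨τ, hτmem, hPa, hPb⟩ := Hcp s
    refine ⟨τ, hτmem, fun t => ?_⟩
    set v : ℝ → ℝ := fun s => ustar (s + τ) with hvdef
    have hv : ∀ s, HasDerivAt v (v s * (a (s+τ) - b (s+τ) * v s)) s := by
      intro s
      have h0 : HasDerivAt (fun s : ℝ => s + τ) 1 s := (hasDerivAt_id s).add_const τ
      have h1 := (hderiv (s + τ)).comp s h0
      rw [mul_one] at h1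
      exact h1
    set ε₁ : ℝ := δ * (1 + Mu) with hε₁def
    have hε₁ : 0 ≤ ε₁ := by positivity
    have hE1 : ∀ s, (a s - a (s+τ)) + (b (s+τ) - b s) * v s ≤ ε₁ := by
      intro s
      have h1 := abs_lt.mp (hPa s)
      have h2 := abs_lt.mp (hPb s)
      have hv0 : (0:ℝ) ≤ v s := (hupos (s+τ)).le
      have hvMu : v s ≤ Mu := huM (s+τ)
      have hprod : (b (s+τ) - b s) * v s ≤ δ * Mu :=
        mul_le_mul h2.2.le hvMu hv0 hδ.le
      rw [hε₁def]
      nlinarith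
    have hE2 : ∀ s, (a (s+τ) - a s) + (b s - b (s+τ)) * ustar s ≤ ε₁ := by
      intro s
      have h1 := abs_lt.mp (hPa s)
      have h2 := abs_lt.mp (hPb s)
      have hv0 : (0:ℝ) ≤ ustar s := (hupos s).le
      have hvMu : ustar s ≤ Mu := huM s
      have hprod : (b s - b (s+τ)) * ustar s ≤ δ * Mu :=
        mul_le_mul (by linarith [h2.1]) hvMu hv0 hδ.le
      rw [hε₁def]
      nlinarith
    have key1 := logistic_key a b (fun s => a (s+τ)) (fun s => b (s+τ)) ustar v m Mu b0 ε₁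
      hm hb0 hε₁ hderiv hv hum huM (fun s => hum (s+τ)) (fun s => huM (s+τ)) hb1 hE1
    have key2 := logistic_key (fun s => a (s+τ)) (fun s => b (s+τ)) a b v ustar m Mu b0 ε₁
      hm hb0 hε₁ hv hderiv (fun s => hum (s+τ)) (fun s => huM (s+τ)) hum huM
      (fun s => hb1 (s+τ)) hE2
    set θ : ℝ := ε₁ / (b0 * m) with hθdef
    have hθnn : 0 ≤ θ := div_nonneg hε₁ (by positivity)
    have hub1 : ustar (t+τ) ≤ ustar t * Real.exp θ :=
      mono_exp θ _ _ (hupos (t+τ)) (hupos t) (key2 t)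
    have hub2 : ustar t ≤ ustar (t+τ) * Real.exp θ :=
      mono_exp θ _ _ (hupos t) (hupos (t+τ)) (key1 t)
    have hexpθ : 1 ≤ Real.exp θ := Real.one_le_exp hθnn
    have hbnd : Mu * (Real.exp θ - 1) < ε := by
      have : θ = δ * (1+Mu) / (b0*m) := by rw [hθdef, hε₁def]
      rw [this]
      exact hballδ
    rw [abs_sub_lt_iff]
    constructor
    · -- ustar (t+τ) - ustar t ≤ ustar t * (exp θ - 1) ≤ Mu (exp θ - 1) < ε
      nlinarith [huM t, hupos t]
    · nlinarith [huM (t+τ), hupos (t+τ)]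
end

section
/- Suppose (u₁, v₁) and (u₂, v₂) are two solutions of the Lotka–Volterra competition system defined on [t₀, ∞) with u_k(t₀) > 0 and v_k(t₀) > 0 for k = 1, 2. Then u₁(t) − u₂(t) → 0 and v₁(t) − v₂(t) → 0 as t → ∞. -/
open Set Filter Real


/-- Positivity of solutions of `u' = u g` with `g` continuous. -/
lemma lv_ode_pos {t₀ : ℝ} {u g : ℝ → ℝ} (hg : Continuous g)
    (hu : ∀ t ∈ Set.Ici t₀, HasDerivWithinAt u (u t * g t) (Set.Ici t₀) t)
    (h0 : 0 < u t₀) : ∀ t ∈ Set.Ici t₀, 0 < u t := by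
  intro b hb
  set F : ℝ → ℝ := fun t => ∫ s in t₀..t, g s with hF
  have hFd : ∀ x : ℝ, HasDerivAt F (g x) x := fun x =>
    (hg.integral_hasStrictDerivAt t₀ x).hasDerivAt
  set h : ℝ → ℝ := fun t => u t * Real.exp (-F t) with hh
  have hucont : ContinuousOn u (Set.Ici t₀) := fun t ht =>
    (hu t ht).continuousWithinAt
  have hcont : ContinuousOn h (Set.Icc t₀ b) :=
    (hucont.mono Icc_subset_Ici_self).mul
      (((continuous_exp.comp (continuous_neg.comp
        ((continuous_iff_continuousAt).2 fun x => (hFd x).continuousAt))).continuousOn))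
  have hderiv : ∀ x ∈ Set.Ico t₀ b, HasDerivWithinAt h 0 (Set.Ici x) x := by
    intro x hx
    have hx0 : x ∈ Set.Ici t₀ := hx.1
    have h1 : HasDerivWithinAt u (u x * g x) (Set.Ici x) x :=
      (hu x hx0).mono (Ici_subset_Ici.2 hx.1)
    have h2 : HasDerivWithinAt (fun t => Real.exp (-F t))
        (Real.exp (-F x) * (-g x)) (Set.Ici x) x :=
      (((hFd x).neg).exp).hasDerivWithinAt
    have := h1.mul h2
    refine this.congr_deriv ?_
    ring
  have hconst := constant_of_has_deriv_right_zero hcont hderiv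
  have hb' : h b = h t₀ := hconst b ⟨hb, le_rfl⟩
  have : u b = (u t₀ * Real.exp (-F t₀)) * Real.exp (F b) := by
    have hb2 : u b * Real.exp (-F b) = u t₀ * Real.exp (-F t₀) := hb'
    have := congrArg (fun y => y * Real.exp (F b)) hb2
    simpa [mul_assoc, ← Real.exp_add] using this
  rw [this]
  positivity



/-- Eventual upper bound for `u' = u g`, `g ≤ aM - bL u`. -/
lemma lv_ode_upper {t₀ : ℝ} {u g : ℝ → ℝ} {aM bL M : ℝ} (hbL : 0 < bL) (haM : 0 < aM)
    (hu : ∀ t ∈ Set.Ici t₀, HasDerivWithinAt u (u t * g t) (Set.Ici t₀) t)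
    (hupos : ∀ t ∈ Set.Ici t₀, 0 < u t)
    (hg : ∀ t ∈ Set.Ici t₀, g t ≤ aM - bL * u t)
    (hM : aM / bL < M) : ∃ T, t₀ ≤ T ∧ ∀ t, T ≤ t → u t ≤ M := by
  have hucont : ContinuousOn u (Set.Ici t₀) := fun t ht => (hu t ht).continuousWithinAt
  set M₀ : ℝ := (aM / bL + M) / 2 with hM₀def
  have hM₀l : aM / bL < M₀ := by rw [hM₀def]; linarith
  have hM₀r : M₀ < M := by rw [hM₀def]; linarith
  have hM₀pos : 0 < M₀ := lt_trans (div_pos haM hbL) hM₀l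
  have hε : 0 < bL * M₀ - aM := by
    have := (div_lt_iff₀ hbL).1 hM₀l
    linarith
  set ε : ℝ := bL * M₀ - aM with hεdef
  -- Phase A : the solution comes below `M₀` at some time
  have hA : ∃ t₁, t₀ ≤ t₁ ∧ u t₁ ≤ M₀ := by
    by_contra hcon
    push_neg at hcon
    set c : ℝ := M₀ * ε with hc
    have hcpos : 0 < c := mul_pos hM₀pos hε
    set b : ℝ := t₀ + 2 * u t₀ / c + 1 with hb
    have h0 : 0 < u t₀ := hupos t₀ Set.self_mem_Ici
    have hbge : t₀ ≤ b := by
      have : 0 < 2 * u t₀ / c := by positivity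
      rw [hb]; linarith
    have hdecay : ∀ x ∈ Set.Icc t₀ b, u x ≤ u t₀ - c / 2 * (x - t₀) := by
      apply image_le_of_deriv_right_lt_deriv_boundary'
        (hucont.mono Icc_subset_Ici_self)
        (fun x hx => (hu x hx.1).mono (Ici_subset_Ici.2 hx.1))
        (by simp)
        (by fun_prop)
        (fun x hx => (((hasDerivWithinAt_id x _).sub_const t₀).const_mul (c/2)).const_sub (u t₀))
      intro x hx _
      have hxI : x ∈ Set.Ici t₀ := hx.1
      have hux : M₀ < u x := hcon x hx.1
      have h1 : g x ≤ aM - bL * u x := hg x hxI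
      have h2 : aM - bL * u x < -ε := by rw [hεdef]; nlinarith
      have h3 : u x * g x ≤ u x * (aM - bL * u x) :=
        mul_le_mul_of_nonneg_left h1 (le_of_lt (hupos x hxI))
      have h4 : u x * (aM - bL * u x) ≤ M₀ * (aM - bL * u x) := by nlinarith
      have h5 : M₀ * (aM - bL * u x) < M₀ * (-ε) := by nlinarith
      have : u x * g x < -c := by rw [hc]; nlinarith
      linarith
    have hub := hdecay b ⟨hbge, le_rfl⟩
    have : u t₀ - c / 2 * (b - t₀) < M₀ := by
      rw [hb]
      have : c / 2 * (2 * u t₀ / c + 1) = u t₀ + c / 2 := by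
        field_simp
      rw [show t₀ + 2 * u t₀ / c + 1 - t₀ = 2 * u t₀ / c + 1 by ring, this]
      linarith
    have := hcon b hbge
    linarith
  obtain ⟨t₁, ht₁, hut₁⟩ := hA
  refine ⟨t₁, ht₁, fun t ht => ?_⟩
  have key : ∀ x ∈ Set.Icc t₁ t, u x ≤ M := by
    apply image_le_of_deriv_right_lt_deriv_boundary'
      (hucont.mono (Icc_subset_Ici_self.trans (Ici_subset_Ici.2 ht₁)))
      (fun x hx => (hu x (le_trans ht₁ hx.1)).mono (Ici_subset_Ici.2 (le_trans ht₁ hx.1)))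
      (le_trans hut₁ hM₀r.le)
      (continuousOn_const)
      (fun x _ => hasDerivWithinAt_const x _ M)
    intro x hx hxM
    have hxI : x ∈ Set.Ici t₀ := le_trans ht₁ hx.1
    have h1 : g x ≤ aM - bL * u x := hg x hxI
    have h2 : aM - bL * u x < 0 := by rw [hxM]; nlinarith
    have := mul_neg_of_pos_of_neg (hupos x hxI) (lt_of_le_of_lt h1 h2)
    exact this
  exact key t ⟨ht, le_rfl⟩

/-- Persistence: lower bound for `u' = u g` when `g ≥ r > 0` whenever `u ≤ δ`. -/
lemma lv_ode_lower {t₀ T : ℝ} {u g : ℝ → ℝ} {δ r : ℝ} (hT : t₀ ≤ T)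
    (hu : ∀ t ∈ Set.Ici t₀, HasDerivWithinAt u (u t * g t) (Set.Ici t₀) t)
    (hupos : ∀ t ∈ Set.Ici t₀, 0 < u t) (hδ : 0 < δ) (hr : 0 < r)
    (hg : ∀ t, T ≤ t → u t ≤ δ → r ≤ g t) :
    ∃ m, 0 < m ∧ ∀ t, T ≤ t → m ≤ u t := by
  have hucont : ContinuousOn u (Set.Ici t₀) := fun t ht => (hu t ht).continuousWithinAt
  set m : ℝ := min δ (u T) with hm
  have hmpos : 0 < m := lt_min hδ (hupos T hT)
  refine ⟨m, hmpos, fun t ht => ?_⟩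
  have key : ∀ x ∈ Set.Icc T t, (fun y => -u y) x ≤ (fun _ : ℝ => -m) x := by
    apply image_le_of_deriv_right_lt_deriv_boundary'
      (f := fun y => -u y) (B := fun _ => -m) (B' := fun _ => 0)
      (f' := fun x => -(u x * g x))
      (((hucont.mono (Icc_subset_Ici_self.trans (Ici_subset_Ici.2 hT)))).neg)
      (fun x hx => ((hu x (le_trans hT hx.1)).mono (Ici_subset_Ici.2 (le_trans hT hx.1))).neg)
      (neg_le_neg (min_le_right _ _))
      (continuousOn_const)
      (fun x _ => hasDerivWithinAt_const x _ (-m))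
    intro x hx hxm
    have hxI : x ∈ Set.Ici t₀ := le_trans hT hx.1
    have hux : u x = m := by linarith [neg_eq_iff_eq_neg.1 hxm]
    have h1 : r ≤ g x := hg x hx.1 (hux.le.trans (min_le_left _ _))
    have : 0 < u x * g x := mul_pos (hupos x hxI) (lt_of_lt_of_le hr h1)
    linarith
  have h2 := key t ⟨ht, le_rfl⟩
  simp only at h2
  linarith



/-- Right-hand limit of slopes of `|z|` when `z` has a right derivative. -/
lemma lv_abs_slope_right {t₀ x : ℝ} {z : ℝ → ℝ} {z' : ℝ} (hx : t₀ ≤ x)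
    (hz : HasDerivWithinAt z z' (Set.Ici t₀) x) :
    ∃ L : ℝ, Filter.Tendsto (fun y => slope (fun t => |z t|) x y)
        (nhdsWithin x (Set.Ioi x)) (nhds L) ∧
      (0 < z x → L = z') ∧ (z x < 0 → L = -z') ∧ (z x = 0 → L = |z'|) := by
  have hsub : nhdsWithin x (Set.Ioi x) ≤ nhdsWithin x (Set.Ici t₀ \ {x}) :=
    nhdsWithin_mono x (fun y hy => ⟨le_trans hx (le_of_lt hy), ne_of_gt hy⟩)
  have Tz : Filter.Tendsto (slope z x) (nhdsWithin x (Set.Ioi x)) (nhds z') :=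
    (hasDerivWithinAt_iff_tendsto_slope.1 hz).mono_left hsub
  have hc : Filter.Tendsto z (nhdsWithin x (Set.Ioi x)) (nhds (z x)) :=
    (hz.continuousWithinAt).mono_left (nhdsWithin_mono x
      (fun y hy => le_trans hx (le_of_lt hy)))
  rcases lt_trichotomy (z x) 0 with hneg | hzero | hpos
  · refine ⟨-z', ?_, fun h => absurd h (not_lt.2 hneg.le), fun _ => rfl,
      fun h => absurd h (ne_of_lt hneg)⟩
    have hev : ∀ᶠ y in nhdsWithin x (Set.Ioi x), z y < 0 :=
      hc (IsOpen.mem_nhds isOpen_Iio hneg)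
    refine Tz.neg.congr' (hev.mono fun y hy => ?_)
    simp only [slope_def_field]
    rw [abs_of_neg hy, abs_of_neg hneg]
    ring
  · refine ⟨|z'|, ?_, fun h => absurd hzero (ne_of_gt h), fun h => absurd hzero (ne_of_lt h),
      fun _ => rfl⟩
    have hev : ∀ᶠ y in nhdsWithin x (Set.Ioi x), y ∈ Set.Ioi x := self_mem_nhdsWithin
    refine Tz.abs.congr' (hev.mono fun y hy => ?_)
    simp only [slope_def_field, hzero, abs_zero, sub_zero]
    rw [abs_div, abs_of_pos (by simpa using sub_pos.2 (Set.mem_Ioi.1 hy) : (0:ℝ) < y - x)]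
  · refine ⟨z', ?_, fun _ => rfl, fun h => absurd h (not_lt.2 hpos.le),
      fun h => absurd h (ne_of_gt hpos)⟩
    have hev : ∀ᶠ y in nhdsWithin x (Set.Ioi x), 0 < z y :=
      hc (IsOpen.mem_nhds isOpen_Ioi hpos)
    refine Tz.congr' (hev.mono fun y hy => ?_)
    simp only [slope_def_field]
    rw [abs_of_pos hy, abs_of_pos hpos]

/-- Comparison of `|x - y|` and `|log x - log y|` for `x, y ∈ [m, M]`. -/
lemma lv_log_bounds {m M x y : ℝ} (hm : 0 < m) (hx : m ≤ x) (hy : m ≤ y)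
    (hxM : x ≤ M) (hyM : y ≤ M) :
    |x - y| / M ≤ |Real.log x - Real.log y| ∧
      |Real.log x - Real.log y| ≤ |x - y| / m := by
  wlog hxy : y ≤ x with H
  · have := H hm hy hx hyM hxM (le_of_not_ge hxy)
    rwa [abs_sub_comm y x, abs_sub_comm (Real.log y) (Real.log x)] at this
  have hx0 : 0 < x := lt_of_lt_of_le hm hx
  have hy0 : 0 < y := lt_of_lt_of_le hm hy
  have hM : 0 < M := lt_of_lt_of_le hx0 hxM
  have hlog : Real.log y ≤ Real.log x := Real.log_le_log hy0 hxy
  rw [abs_of_nonneg (sub_nonneg.2 hxy), abs_of_nonneg (sub_nonneg.2 hlog)]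
  constructor
  · -- (x - y)/M ≤ log x - log y
    have h1 : Real.log (y / x) ≤ y / x - 1 := Real.log_le_sub_one_of_pos (by positivity)
    rw [Real.log_div (ne_of_gt hy0) (ne_of_gt hx0)] at h1
    have h2 : (x - y) / x ≤ Real.log x - Real.log y := by
      have : y / x - 1 = -((x - y) / x) := by field_simp; ring
      rw [this] at h1
      linarith
    refine le_trans ?_ h2
    gcongr
  · -- log x - log y ≤ (x - y)/m
    have h1 : Real.log (x / y) ≤ x / y - 1 := Real.log_le_sub_one_of_pos (by positivity)
    rw [Real.log_div (ne_of_gt hx0) (ne_of_gt hy0)] at h1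
    have h2 : x / y - 1 = (x - y) / y := by field_simp
    rw [h2] at h1
    refine le_trans h1 ?_
    gcongr



/-- Exponential decay of a nonnegative function whose right Dini derivative
is bounded by `-κ V`. -/
lemma lv_decay {T κ : ℝ} {V : ℝ → ℝ} (hκ : 0 < κ)
    (hVc : ContinuousOn V (Set.Ici T)) (hV0 : ∀ t, T ≤ t → 0 ≤ V t)
    (hslope : ∀ x, T ≤ x → ∃ L, Filter.Tendsto (fun y => slope V x y)
        (nhdsWithin x (Set.Ioi x)) (nhds L) ∧ L ≤ -κ * V x) :
    ∀ t, T ≤ t → V t ≤ (V T + 1) * Real.exp (-(κ/2) * (t - T)) := by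
  intro t ht
  set B : ℝ → ℝ := fun s => (V T + 1) * Real.exp (-(κ/2) * (s - T)) with hBdef
  have hBpos : ∀ s, 0 < B s := fun s => by
    have : (0:ℝ) ≤ V T := hV0 T le_rfl
    positivity
  have hBd : ∀ s : ℝ, HasDerivAt B (-(κ/2) * B s) s := by
    intro s
    have h1 : HasDerivAt (fun y : ℝ => -(κ/2) * (y - T)) (-(κ/2)) s := by
      simpa using ((hasDerivAt_id s).sub_const T).const_mul (-(κ/2))
    have h2 := (h1.exp).const_mul (V T + 1)
    refine h2.congr_deriv ?_
    simp [hBdef]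
    ring
  have key : ∀ x ∈ Set.Icc T t, V x ≤ B x := by
    apply image_le_of_liminf_slope_right_lt_deriv_boundary'
      (f := V) (f' := fun x => -κ * V x) (B := B) (B' := fun x => -(κ/2) * B x)
      (hVc.mono Icc_subset_Ici_self)
    · intro x hx r hr
      obtain ⟨L, hL, hLle⟩ := hslope x hx.1
      have : ∀ᶠ y in nhdsWithin x (Set.Ioi x), slope V x y < r :=
        hL.eventually_lt_const (lt_of_le_of_lt hLle hr)
      exact this.frequently
    · show V T ≤ B T
      simp [hBdef]
    · exact fun x _ => (hBd x).continuousAt.continuousWithinAt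
    · exact fun x _ => (hBd x).hasDerivWithinAt
    · intro x hx hVB
      rw [hVB]
      have := hBpos x
      nlinarith
  exact key t ⟨ht, le_rfl⟩


private lemma lv_inf_le {f : ℝ → ℝ} (hpos : 0 < ⨅ t, f t) (t : ℝ) : (⨅ s, f s) ≤ f t := by
  have hbb : BddBelow (Set.range f) := by
    by_contra h
    rw [Real.iInf_of_not_bddBelow h] at hpos
    exact lt_irrefl _ hpos
  exact ciInf_le hbb t

set_option maxHeartbeats 2000000 in
/-- For the nonautonomous Lotka–Volterra competition system with coefficients
bounded above and below by positive constants and satisfying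
`a₁^L > c₁^M a₂^M / c₂^L` and `a₂^L > a₁^M b₂^M / b₁^L`, any two solutions on `[t₀, ∞)`
with positive initial values at `t₀` approach each other:
`u₁(t) − u₂(t) → 0` and `v₁(t) − v₂(t) → 0` as `t → ∞`. -/
theorem lotka_volterra_solutions_approach_each_other
    (a₁ b₁ c₁ a₂ b₂ c₂ : ℝ → ℝ)
    (ha₁ : Continuous a₁) (hb₁ : Continuous b₁) (hc₁ : Continuous c₁)
    (ha₂ : Continuous a₂) (hb₂ : Continuous b₂) (hc₂ : Continuous c₂)
    (ha₁B : BddAbove (Set.range a₁)) (hb₁B : BddAbove (Set.range b₁))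
    (hc₁B : BddAbove (Set.range c₁)) (ha₂B : BddAbove (Set.range a₂))
    (hb₂B : BddAbove (Set.range b₂)) (hc₂B : BddAbove (Set.range c₂))
    (ha₁pos : 0 < ⨅ t, a₁ t) (hb₁pos : 0 < ⨅ t, b₁ t) (hc₁pos : 0 < ⨅ t, c₁ t)
    (ha₂pos : 0 < ⨅ t, a₂ t) (hb₂pos : 0 < ⨅ t, b₂ t) (hc₂pos : 0 < ⨅ t, c₂ t)
    (hcond₁ : (⨆ t, c₁ t) * (⨆ t, a₂ t) / (⨅ t, c₂ t) < ⨅ t, a₁ t)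
    (hcond₂ : (⨆ t, a₁ t) * (⨆ t, b₂ t) / (⨅ t, b₁ t) < ⨅ t, a₂ t)
    (t₀ : ℝ) (u₁ v₁ u₂ v₂ : ℝ → ℝ)
    (hsol₁ : ∀ t ∈ Set.Ici t₀,
      HasDerivWithinAt u₁ (u₁ t * (a₁ t - b₁ t * u₁ t - c₁ t * v₁ t)) (Set.Ici t₀) t ∧
      HasDerivWithinAt v₁ (v₁ t * (a₂ t - b₂ t * u₁ t - c₂ t * v₁ t)) (Set.Ici t₀) t)
    (hsol₂ : ∀ t ∈ Set.Ici t₀,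
      HasDerivWithinAt u₂ (u₂ t * (a₁ t - b₁ t * u₂ t - c₁ t * v₂ t)) (Set.Ici t₀) t ∧
      HasDerivWithinAt v₂ (v₂ t * (a₂ t - b₂ t * u₂ t - c₂ t * v₂ t)) (Set.Ici t₀) t)
    (hpos₁ : 0 < u₁ t₀ ∧ 0 < v₁ t₀) (hpos₂ : 0 < u₂ t₀ ∧ 0 < v₂ t₀) :
    Filter.Tendsto (fun t => u₁ t - u₂ t) Filter.atTop (nhds 0) ∧
    Filter.Tendsto (fun t => v₁ t - v₂ t) Filter.atTop (nhds 0) := by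
  obtain ⟨hu₁0, hv₁0⟩ := hpos₁
  obtain ⟨hu₂0, hv₂0⟩ := hpos₂
  -- pointwise coefficient bounds
  have hA1 : ∀ t, (⨅ s, a₁ s) ≤ a₁ t ∧ a₁ t ≤ ⨆ s, a₁ s :=
    fun t => ⟨lv_inf_le ha₁pos t, le_ciSup ha₁B t⟩
  have hB1 : ∀ t, (⨅ s, b₁ s) ≤ b₁ t ∧ b₁ t ≤ ⨆ s, b₁ s :=
    fun t => ⟨lv_inf_le hb₁pos t, le_ciSup hb₁B t⟩
  have hC1 : ∀ t, (⨅ s, c₁ s) ≤ c₁ t ∧ c₁ t ≤ ⨆ s, c₁ s :=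
    fun t => ⟨lv_inf_le hc₁pos t, le_ciSup hc₁B t⟩
  have hA2 : ∀ t, (⨅ s, a₂ s) ≤ a₂ t ∧ a₂ t ≤ ⨆ s, a₂ s :=
    fun t => ⟨lv_inf_le ha₂pos t, le_ciSup ha₂B t⟩
  have hB2 : ∀ t, (⨅ s, b₂ s) ≤ b₂ t ∧ b₂ t ≤ ⨆ s, b₂ s :=
    fun t => ⟨lv_inf_le hb₂pos t, le_ciSup hb₂B t⟩
  have hC2 : ∀ t, (⨅ s, c₂ s) ≤ c₂ t ∧ c₂ t ≤ ⨆ s, c₂ s :=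
    fun t => ⟨lv_inf_le hc₂pos t, le_ciSup hc₂B t⟩
  set A1L : ℝ := ⨅ t, a₁ t with hA1Ldef
  set A1M : ℝ := ⨆ t, a₁ t with hA1Mdef
  set B1L : ℝ := ⨅ t, b₁ t with hB1Ldef
  set B1M : ℝ := ⨆ t, b₁ t with hB1Mdef
  set C1L : ℝ := ⨅ t, c₁ t with hC1Ldef
  set C1M : ℝ := ⨆ t, c₁ t with hC1Mdef
  set A2L : ℝ := ⨅ t, a₂ t with hA2Ldef
  set A2M : ℝ := ⨆ t, a₂ t with hA2Mdef
  set B2L : ℝ := ⨅ t, b₂ t with hB2Ldef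
  set B2M : ℝ := ⨆ t, b₂ t with hB2Mdef
  set C2L : ℝ := ⨅ t, c₂ t with hC2Ldef
  set C2M : ℝ := ⨆ t, c₂ t with hC2Mdef
  clear hA1Ldef hA1Mdef hB1Ldef hB1Mdef hC1Ldef hC1Mdef
  clear hA2Ldef hA2Mdef hB2Ldef hB2Mdef hC2Ldef hC2Mdef
  have hA1Mpos : 0 < A1M := lt_of_lt_of_le ha₁pos ((hA1 0).1.trans (hA1 0).2)
  have hB1Mpos : 0 < B1M := lt_of_lt_of_le hb₁pos ((hB1 0).1.trans (hB1 0).2)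
  have hC1Mpos : 0 < C1M := lt_of_lt_of_le hc₁pos ((hC1 0).1.trans (hC1 0).2)
  have hA2Mpos : 0 < A2M := lt_of_lt_of_le ha₂pos ((hA2 0).1.trans (hA2 0).2)
  have hB2Mpos : 0 < B2M := lt_of_lt_of_le hb₂pos ((hB2 0).1.trans (hB2 0).2)
  have hC2Mpos : 0 < C2M := lt_of_lt_of_le hc₂pos ((hC2 0).1.trans (hC2 0).2)
  -- products form of the two structural conditions
  have hcondm₁ : A2M * C1M < A1L * C2L := by
    have := (div_lt_iff₀ hc₂pos).1 hcond₁
    linarith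
  have hcondm₂ : A1M * B2M < A2L * B1L := by
    have := (div_lt_iff₀ hb₁pos).1 hcond₂
    linarith
  -- continuity of the solutions
  have hu₁cont : ContinuousOn u₁ (Set.Ici t₀) := fun t ht => ((hsol₁ t ht).1).continuousWithinAt
  have hv₁cont : ContinuousOn v₁ (Set.Ici t₀) := fun t ht => ((hsol₁ t ht).2).continuousWithinAt
  have hu₂cont : ContinuousOn u₂ (Set.Ici t₀) := fun t ht => ((hsol₂ t ht).1).continuousWithinAt
  have hv₂cont : ContinuousOn v₂ (Set.Ici t₀) := fun t ht => ((hsol₂ t ht).2).continuousWithinAt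
  have hmax : Continuous fun t : ℝ => max t t₀ := continuous_id.max continuous_const
  have hmem : ∀ x : ℝ, max x t₀ ∈ Set.Ici t₀ := fun x => Set.mem_Ici.2 (le_max_right x t₀)
  have hu₁cm : Continuous fun t => u₁ (max t t₀) := hu₁cont.comp_continuous hmax hmem
  have hv₁cm : Continuous fun t => v₁ (max t t₀) := hv₁cont.comp_continuous hmax hmem
  have hu₂cm : Continuous fun t => u₂ (max t t₀) := hu₂cont.comp_continuous hmax hmem
  have hv₂cm : Continuous fun t => v₂ (max t t₀) := hv₂cont.comp_continuous hmax hmem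
  -- positivity
  have hu₁pos : ∀ t ∈ Set.Ici t₀, 0 < u₁ t := by
    apply lv_ode_pos (g := fun t => a₁ t - b₁ t * u₁ (max t t₀) - c₁ t * v₁ (max t t₀))
      ((ha₁.sub (hb₁.mul hu₁cm)).sub (hc₁.mul hv₁cm)) ?_ hu₁0
    intro t ht
    simpa [max_eq_left (Set.mem_Ici.1 ht)] using (hsol₁ t ht).1
  have hv₁pos : ∀ t ∈ Set.Ici t₀, 0 < v₁ t := by
    apply lv_ode_pos (g := fun t => a₂ t - b₂ t * u₁ (max t t₀) - c₂ t * v₁ (max t t₀))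
      ((ha₂.sub (hb₂.mul hu₁cm)).sub (hc₂.mul hv₁cm)) ?_ hv₁0
    intro t ht
    simpa [max_eq_left (Set.mem_Ici.1 ht)] using (hsol₁ t ht).2
  have hu₂pos : ∀ t ∈ Set.Ici t₀, 0 < u₂ t := by
    apply lv_ode_pos (g := fun t => a₁ t - b₁ t * u₂ (max t t₀) - c₁ t * v₂ (max t t₀))
      ((ha₁.sub (hb₁.mul hu₂cm)).sub (hc₁.mul hv₂cm)) ?_ hu₂0
    intro t ht
    simpa [max_eq_left (Set.mem_Ici.1 ht)] using (hsol₂ t ht).1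
  have hv₂pos : ∀ t ∈ Set.Ici t₀, 0 < v₂ t := by
    apply lv_ode_pos (g := fun t => a₂ t - b₂ t * u₂ (max t t₀) - c₂ t * v₂ (max t t₀))
      ((ha₂.sub (hb₂.mul hu₂cm)).sub (hc₂.mul hv₂cm)) ?_ hv₂0
    intro t ht
    simpa [max_eq_left (Set.mem_Ici.1 ht)] using (hsol₂ t ht).2
  -- the eventual upper bounds
  set M₁ : ℝ := (A1M / B1L + A2L / B2M) / 2 with hM₁def
  set M₂ : ℝ := (A2M / C2L + A1L / C1M) / 2 with hM₂def
  have hM₁l : A1M / B1L < M₁ := by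
    rw [hM₁def]
    have : A1M / B1L < A2L / B2M := (div_lt_div_iff₀ hb₁pos hB2Mpos).2 hcondm₂
    linarith
  have hM₁r : M₁ < A2L / B2M := by
    rw [hM₁def]
    have : A1M / B1L < A2L / B2M := (div_lt_div_iff₀ hb₁pos hB2Mpos).2 hcondm₂
    linarith
  have hM₂l : A2M / C2L < M₂ := by
    rw [hM₂def]
    have : A2M / C2L < A1L / C1M := (div_lt_div_iff₀ hc₂pos hC1Mpos).2 hcondm₁
    linarith
  have hM₂r : M₂ < A1L / C1M := by
    rw [hM₂def]
    have : A2M / C2L < A1L / C1M := (div_lt_div_iff₀ hc₂pos hC1Mpos).2 hcondm₁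
    linarith
  have hM₁pos : 0 < M₁ := lt_trans (div_pos hA1Mpos hb₁pos) hM₁l
  have hM₂pos : 0 < M₂ := lt_trans (div_pos hA2Mpos hc₂pos) hM₂l
  have hr₁pos : 0 < A1L - C1M * M₂ := by
    have := (lt_div_iff₀ hC1Mpos).1 hM₂r
    linarith
  have hr₂pos : 0 < A2L - B2M * M₁ := by
    have := (lt_div_iff₀ hB2Mpos).1 hM₁r
    linarith
  -- upper bound hypotheses for the four equations
  have hgu₁ : ∀ t ∈ Set.Ici t₀, a₁ t - b₁ t * u₁ t - c₁ t * v₁ t ≤ A1M - B1L * u₁ t := by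
    intro t ht
    have h1 := (hA1 t).2
    have h2 : B1L * u₁ t ≤ b₁ t * u₁ t :=
      mul_le_mul_of_nonneg_right (hB1 t).1 (hu₁pos t ht).le
    have h3 : 0 < c₁ t * v₁ t :=
      mul_pos (lt_of_lt_of_le hc₁pos (hC1 t).1) (hv₁pos t ht)
    linarith
  have hgu₂ : ∀ t ∈ Set.Ici t₀, a₁ t - b₁ t * u₂ t - c₁ t * v₂ t ≤ A1M - B1L * u₂ t := by
    intro t ht
    have h1 := (hA1 t).2
    have h2 : B1L * u₂ t ≤ b₁ t * u₂ t :=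
      mul_le_mul_of_nonneg_right (hB1 t).1 (hu₂pos t ht).le
    have h3 : 0 < c₁ t * v₂ t :=
      mul_pos (lt_of_lt_of_le hc₁pos (hC1 t).1) (hv₂pos t ht)
    linarith
  have hgv₁ : ∀ t ∈ Set.Ici t₀, a₂ t - b₂ t * u₁ t - c₂ t * v₁ t ≤ A2M - C2L * v₁ t := by
    intro t ht
    have h1 := (hA2 t).2
    have h2 : C2L * v₁ t ≤ c₂ t * v₁ t :=
      mul_le_mul_of_nonneg_right (hC2 t).1 (hv₁pos t ht).le
    have h3 : 0 < b₂ t * u₁ t :=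
      mul_pos (lt_of_lt_of_le hb₂pos (hB2 t).1) (hu₁pos t ht)
    linarith
  have hgv₂ : ∀ t ∈ Set.Ici t₀, a₂ t - b₂ t * u₂ t - c₂ t * v₂ t ≤ A2M - C2L * v₂ t := by
    intro t ht
    have h1 := (hA2 t).2
    have h2 : C2L * v₂ t ≤ c₂ t * v₂ t :=
      mul_le_mul_of_nonneg_right (hC2 t).1 (hv₂pos t ht).le
    have h3 : 0 < b₂ t * u₂ t :=
      mul_pos (lt_of_lt_of_le hb₂pos (hB2 t).1) (hu₂pos t ht)
    linarith
  obtain ⟨T₁, hT₁t₀, hT₁⟩ := lv_ode_upper hb₁pos hA1Mpos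
    (fun t ht => (hsol₁ t ht).1) hu₁pos hgu₁ hM₁l
  obtain ⟨T₂, hT₂t₀, hT₂⟩ := lv_ode_upper hb₁pos hA1Mpos
    (fun t ht => (hsol₂ t ht).1) hu₂pos hgu₂ hM₁l
  obtain ⟨T₃, hT₃t₀, hT₃⟩ := lv_ode_upper hc₂pos hA2Mpos
    (fun t ht => (hsol₁ t ht).2) hv₁pos hgv₁ hM₂l
  obtain ⟨T₄, hT₄t₀, hT₄⟩ := lv_ode_upper hc₂pos hA2Mpos
    (fun t ht => (hsol₂ t ht).2) hv₂pos hgv₂ hM₂l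
  set T₅ : ℝ := max (max T₁ T₂) (max T₃ T₄) with hT₅def
  have hT₅t₀ : t₀ ≤ T₅ :=
    le_trans hT₁t₀ (le_trans (le_max_left T₁ T₂) (le_max_left _ _))
  have hU₁ : ∀ t, T₅ ≤ t → u₁ t ≤ M₁ := fun t ht =>
    hT₁ t (le_trans (le_trans (le_max_left T₁ T₂) (le_max_left _ _)) ht)
  have hU₂ : ∀ t, T₅ ≤ t → u₂ t ≤ M₁ := fun t ht =>
    hT₂ t (le_trans (le_trans (le_max_right T₁ T₂) (le_max_left _ _)) ht)
  have hV₁ : ∀ t, T₅ ≤ t → v₁ t ≤ M₂ := fun t ht =>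
    hT₃ t (le_trans (le_trans (le_max_left T₃ T₄) (le_max_right _ _)) ht)
  have hV₂ : ∀ t, T₅ ≤ t → v₂ t ≤ M₂ := fun t ht =>
    hT₄ t (le_trans (le_trans (le_max_right T₃ T₄) (le_max_right _ _)) ht)
  -- lower bounds (persistence)
  have hδ₁pos : 0 < (A1L - C1M * M₂) / (2 * B1M) := by positivity
  have hδ₂pos : 0 < (A2L - B2M * M₁) / (2 * C2M) := by positivity
  have hlowu : ∀ (u v : ℝ → ℝ), (∀ t ∈ Set.Ici t₀, 0 < u t) → (∀ t ∈ Set.Ici t₀, 0 < v t) →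
      (∀ t ∈ Set.Ici t₀, HasDerivWithinAt u (u t * (a₁ t - b₁ t * u t - c₁ t * v t)) (Set.Ici t₀) t) →
      (∀ t, T₅ ≤ t → v t ≤ M₂) →
      ∃ m, 0 < m ∧ ∀ t, T₅ ≤ t → m ≤ u t := by
    intro u v hup hvp hud hvM
    apply lv_ode_lower hT₅t₀ hud hup hδ₁pos (by positivity : (0:ℝ) < (A1L - C1M * M₂)/2)
    intro t ht hle
    have htt₀ : t ∈ Set.Ici t₀ := Set.mem_Ici.2 (le_trans hT₅t₀ ht)
    have h1 := (hA1 t).1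
    have h2 : b₁ t * u t ≤ B1M * ((A1L - C1M * M₂) / (2 * B1M)) :=
      mul_le_mul (hB1 t).2 hle (hup t htt₀).le hB1Mpos.le
    have h2' : B1M * ((A1L - C1M * M₂) / (2 * B1M)) = (A1L - C1M * M₂) / 2 := by
      field_simp
    have h3 : c₁ t * v t ≤ C1M * M₂ :=
      mul_le_mul (hC1 t).2 (hvM t ht) (hvp t htt₀).le hC1Mpos.le
    rw [h2'] at h2
    linarith
  have hlowv : ∀ (u v : ℝ → ℝ), (∀ t ∈ Set.Ici t₀, 0 < u t) → (∀ t ∈ Set.Ici t₀, 0 < v t) →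
      (∀ t ∈ Set.Ici t₀, HasDerivWithinAt v (v t * (a₂ t - b₂ t * u t - c₂ t * v t)) (Set.Ici t₀) t) →
      (∀ t, T₅ ≤ t → u t ≤ M₁) →
      ∃ m, 0 < m ∧ ∀ t, T₅ ≤ t → m ≤ v t := by
    intro u v hup hvp hvd huM
    apply lv_ode_lower hT₅t₀ hvd hvp hδ₂pos (by positivity : (0:ℝ) < (A2L - B2M * M₁)/2)
    intro t ht hle
    have htt₀ : t ∈ Set.Ici t₀ := Set.mem_Ici.2 (le_trans hT₅t₀ ht)
    have h1 := (hA2 t).1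
    have h2 : c₂ t * v t ≤ C2M * ((A2L - B2M * M₁) / (2 * C2M)) :=
      mul_le_mul (hC2 t).2 hle (hvp t htt₀).le hC2Mpos.le
    have h2' : C2M * ((A2L - B2M * M₁) / (2 * C2M)) = (A2L - B2M * M₁) / 2 := by
      field_simp
    have h3 : b₂ t * u t ≤ B2M * M₁ :=
      mul_le_mul (hB2 t).2 (huM t ht) (hup t htt₀).le hB2Mpos.le
    rw [h2'] at h2
    linarith
  obtain ⟨mu₁, hmu₁pos, hmu₁⟩ := hlowu u₁ v₁ hu₁pos hv₁pos (fun t ht => (hsol₁ t ht).1) hV₁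
  obtain ⟨mu₂, hmu₂pos, hmu₂⟩ := hlowu u₂ v₂ hu₂pos hv₂pos (fun t ht => (hsol₂ t ht).1) hV₂
  obtain ⟨mv₁, hmv₁pos, hmv₁⟩ := hlowv u₁ v₁ hu₁pos hv₁pos (fun t ht => (hsol₁ t ht).2) hU₁
  obtain ⟨mv₂, hmv₂pos, hmv₂⟩ := hlowv u₂ v₂ hu₂pos hv₂pos (fun t ht => (hsol₂ t ht).2) hU₂
  set m₁ : ℝ := min mu₁ mu₂ with hm₁def
  set m₂ : ℝ := min mv₁ mv₂ with hm₂def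
  have hm₁pos : 0 < m₁ := lt_min hmu₁pos hmu₂pos
  have hm₂pos : 0 < m₂ := lt_min hmv₁pos hmv₂pos
  have hU₁l : ∀ t, T₅ ≤ t → m₁ ≤ u₁ t := fun t ht => le_trans (min_le_left _ _) (hmu₁ t ht)
  have hU₂l : ∀ t, T₅ ≤ t → m₁ ≤ u₂ t := fun t ht => le_trans (min_le_right _ _) (hmu₂ t ht)
  have hV₁l : ∀ t, T₅ ≤ t → m₂ ≤ v₁ t := fun t ht => le_trans (min_le_left _ _) (hmv₁ t ht)
  have hV₂l : ∀ t, T₅ ≤ t → m₂ ≤ v₂ t := fun t ht => le_trans (min_le_right _ _) (hmv₂ t ht)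
  -- the Lyapunov weight β
  have hA1LM : A1L ≤ A1M := (hA1 0).1.trans (hA1 0).2
  have hA2LM : A2L ≤ A2M := (hA2 0).1.trans (hA2 0).2
  have hprod : C1M * B2M < C2L * B1L := by
    have e0 : A1L * A2L ≤ A1M * A2M :=
      mul_le_mul hA1LM hA2LM ha₂pos.le hA1Mpos.le
    have e1 : C1M * B2M * (A1L * A2L) ≤ C1M * B2M * (A1M * A2M) :=
      mul_le_mul_of_nonneg_left e0 (by positivity)
    have e2 : (A2M * C1M) * (A1M * B2M) < (A1L * C2L) * (A2L * B1L) :=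
      mul_lt_mul'' hcondm₁ hcondm₂ (by positivity) (by positivity)
    have e3 : C1M * B2M * (A1L * A2L) < (C2L * B1L) * (A1L * A2L) := by linarith
    exact lt_of_mul_lt_mul_right e3 (by positivity)
  set β : ℝ := (C1M / C2L + B1L / B2M) / 2 with hβdef
  have hββ : C1M / C2L < B1L / B2M := (div_lt_div_iff₀ hc₂pos hB2Mpos).2 (by linarith)
  have hβ1 : C1M / C2L < β := by rw [hβdef]; linarith
  have hβ2 : β < B1L / B2M := by rw [hβdef]; linarith
  have hβpos : 0 < β := lt_trans (div_pos hC1Mpos hc₂pos) hβ1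
  have hk₁pos : 0 < B1L - β * B2M := by
    have := (lt_div_iff₀ hB2Mpos).1 hβ2
    linarith
  have hk₂pos : 0 < β * C2L - C1M := by
    have := (div_lt_iff₀ hc₂pos).1 hβ1
    linarith
  set k₁ : ℝ := B1L - β * B2M with hk₁def
  set k₂ : ℝ := β * C2L - C1M with hk₂def
  set κ : ℝ := min (k₁ * m₁) (k₂ * m₂ / β) with hκdef
  have hκpos : 0 < κ := lt_min (by positivity) (by positivity)
  have hκ1 : κ ≤ k₁ * m₁ := min_le_left _ _
  have hκ2 : κ * β ≤ k₂ * m₂ := by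
    have h := min_le_right (k₁ * m₁) (k₂ * m₂ / β)
    calc κ * β ≤ k₂ * m₂ / β * β := mul_le_mul_of_nonneg_right h hβpos.le
      _ = k₂ * m₂ := by field_simp
  -- the Lyapunov function
  set z : ℝ → ℝ := fun t => Real.log (u₁ t) - Real.log (u₂ t) with hzdef
  set w : ℝ → ℝ := fun t => Real.log (v₁ t) - Real.log (v₂ t) with hwdef
  set Vf : ℝ → ℝ := fun t => |z t| + β * |w t| with hVdef
  have hzd : ∀ x ∈ Set.Ici t₀, HasDerivWithinAt z
      (-(b₁ x) * (u₁ x - u₂ x) - c₁ x * (v₁ x - v₂ x)) (Set.Ici t₀) x := by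
    intro x hx
    have h1 := ((hsol₁ x hx).1).log (ne_of_gt (hu₁pos x hx))
    have h2 := ((hsol₂ x hx).1).log (ne_of_gt (hu₂pos x hx))
    have h3 := h1.sub h2
    rw [mul_div_cancel_left₀ _ (ne_of_gt (hu₁pos x hx)),
      mul_div_cancel_left₀ _ (ne_of_gt (hu₂pos x hx))] at h3
    refine h3.congr_deriv ?_
    ring
  have hwd : ∀ x ∈ Set.Ici t₀, HasDerivWithinAt w
      (-(b₂ x) * (u₁ x - u₂ x) - c₂ x * (v₁ x - v₂ x)) (Set.Ici t₀) x := by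
    intro x hx
    have h1 := ((hsol₁ x hx).2).log (ne_of_gt (hv₁pos x hx))
    have h2 := ((hsol₂ x hx).2).log (ne_of_gt (hv₂pos x hx))
    have h3 := h1.sub h2
    rw [mul_div_cancel_left₀ _ (ne_of_gt (hv₁pos x hx)),
      mul_div_cancel_left₀ _ (ne_of_gt (hv₂pos x hx))] at h3
    refine h3.congr_deriv ?_
    ring
  have hzc : ContinuousOn z (Set.Ici t₀) := fun x hx => (hzd x hx).continuousWithinAt
  have hwc : ContinuousOn w (Set.Ici t₀) := fun x hx => (hwd x hx).continuousWithinAt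
  have hVcont : ContinuousOn Vf (Set.Ici T₅) :=
    ((hzc.abs).add (continuousOn_const.mul (hwc.abs))).mono (Ici_subset_Ici.2 hT₅t₀)
  have hV0 : ∀ t, T₅ ≤ t → 0 ≤ Vf t := by
    intro t _
    simp only [hVdef]
    positivity
  -- the differential inequality for Vf
  have hslope : ∀ x, T₅ ≤ x → ∃ L, Filter.Tendsto (fun y => slope Vf x y)
      (nhdsWithin x (Set.Ioi x)) (nhds L) ∧ L ≤ -κ * Vf x := by
    intro x hx
    have hxt₀' : t₀ ≤ x := le_trans hT₅t₀ hx
    have hxt₀ : x ∈ Set.Ici t₀ := Set.mem_Ici.2 hxt₀'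
    obtain ⟨Lz, hLzT, hLzp, hLzn, hLz0⟩ := lv_abs_slope_right hxt₀' (hzd x hxt₀)
    obtain ⟨Lw, hLwT, hLwp, hLwn, hLw0⟩ := lv_abs_slope_right hxt₀' (hwd x hxt₀)
    have hu₁xp : 0 < u₁ x := hu₁pos x hxt₀
    have hu₂xp : 0 < u₂ x := hu₂pos x hxt₀
    have hv₁xp : 0 < v₁ x := hv₁pos x hxt₀
    have hv₂xp : 0 < v₂ x := hv₂pos x hxt₀
    have hc₁x0 : 0 ≤ c₁ x := (lt_of_lt_of_le hc₁pos (hC1 x).1).le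
    have hb₂x0 : 0 ≤ b₂ x := (lt_of_lt_of_le hb₂pos (hB2 x).1).le
    refine ⟨Lz + β * Lw, ?_, ?_⟩
    · have h := hLzT.add (hLwT.const_mul β)
      apply h.congr
      intro y
      simp only [slope_def_field, hVdef]
      ring
    · -- the numeric estimate
      obtain ⟨hulb, huub⟩ := lv_log_bounds hm₁pos (hU₁l x hx) (hU₂l x hx) (hU₁ x hx) (hU₂ x hx)
      obtain ⟨hvlb, hvub⟩ := lv_log_bounds hm₂pos (hV₁l x hx) (hV₂l x hx) (hV₁ x hx) (hV₂ x hx)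
      have h9 : m₁ * |z x| ≤ |u₁ x - u₂ x| := by
        have h := (le_div_iff₀ hm₁pos).1 huub
        simp only [hzdef]
        linarith only [h]
      have h10 : m₂ * |w x| ≤ |v₁ x - v₂ x| := by
        have h := (le_div_iff₀ hm₂pos).1 hvub
        simp only [hwdef]
        linarith only [h]
      have hLzb : Lz ≤ -(b₁ x) * |u₁ x - u₂ x| + c₁ x * |v₁ x - v₂ x| := by
        rcases lt_trichotomy (z x) 0 with h | h | h
        · have hlt : u₁ x < u₂ x := by
            have hlog : Real.log (u₁ x) < Real.log (u₂ x) := by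
              simp only [hzdef] at h; linarith only [h]
            exact (Real.log_lt_log_iff hu₁xp hu₂xp).1 hlog
          rw [hLzn h, abs_of_neg (sub_neg.2 hlt)]
          linarith only [mul_le_mul_of_nonneg_left (le_abs_self (v₁ x - v₂ x)) hc₁x0]
        · have hEq : u₁ x = u₂ x := by
            have hlog : Real.log (u₁ x) = Real.log (u₂ x) := by
              simp only [hzdef] at h; linarith only [h]
            exact Real.log_injOn_pos (Set.mem_Ioi.2 hu₁xp) (Set.mem_Ioi.2 hu₂xp) hlog
          rw [hLz0 h, hEq]
          simp [abs_mul, abs_of_nonneg hc₁x0]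
        · have hlt : u₂ x < u₁ x := by
            have hlog : Real.log (u₂ x) < Real.log (u₁ x) := by
              simp only [hzdef] at h; linarith only [h]
            exact (Real.log_lt_log_iff hu₂xp hu₁xp).1 hlog
          rw [hLzp h, abs_of_pos (sub_pos.2 hlt)]
          linarith only [mul_le_mul_of_nonneg_left (neg_abs_le (v₁ x - v₂ x)) hc₁x0]
      have hLwb : Lw ≤ b₂ x * |u₁ x - u₂ x| - c₂ x * |v₁ x - v₂ x| := by
        rcases lt_trichotomy (w x) 0 with h | h | h
        · have hlt : v₁ x < v₂ x := by
            have hlog : Real.log (v₁ x) < Real.log (v₂ x) := by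
              simp only [hwdef] at h; linarith only [h]
            exact (Real.log_lt_log_iff hv₁xp hv₂xp).1 hlog
          rw [hLwn h, abs_of_neg (sub_neg.2 hlt)]
          linarith only [mul_le_mul_of_nonneg_left (le_abs_self (u₁ x - u₂ x)) hb₂x0]
        · have hEq : v₁ x = v₂ x := by
            have hlog : Real.log (v₁ x) = Real.log (v₂ x) := by
              simp only [hwdef] at h; linarith only [h]
            exact Real.log_injOn_pos (Set.mem_Ioi.2 hv₁xp) (Set.mem_Ioi.2 hv₂xp) hlog
          rw [hLw0 h, hEq]
          simp [abs_mul, abs_of_nonneg hb₂x0]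
        · have hlt : v₂ x < v₁ x := by
            have hlog : Real.log (v₂ x) < Real.log (v₁ x) := by
              simp only [hwdef] at h; linarith only [h]
            exact (Real.log_lt_log_iff hv₂xp hv₁xp).1 hlog
          rw [hLwp h, abs_of_pos (sub_pos.2 hlt)]
          linarith only [mul_le_mul_of_nonneg_left (neg_abs_le (u₁ x - u₂ x)) hb₂x0]
      have hs1 : β * Lw ≤ β * (b₂ x * |u₁ x - u₂ x| - c₂ x * |v₁ x - v₂ x|) :=
        mul_le_mul_of_nonneg_left hLwb hβpos.le
      have hco1 : k₁ * |u₁ x - u₂ x| ≤ (b₁ x - β * b₂ x) * |u₁ x - u₂ x| := by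
        apply mul_le_mul_of_nonneg_right _ (abs_nonneg _)
        have e1 := mul_le_mul_of_nonneg_left (hB2 x).2 hβpos.le
        have e2 := (hB1 x).1
        rw [hk₁def]
        linarith only [e1, e2]
      have hco2 : k₂ * |v₁ x - v₂ x| ≤ (β * c₂ x - c₁ x) * |v₁ x - v₂ x| := by
        apply mul_le_mul_of_nonneg_right _ (abs_nonneg _)
        have e1 := mul_le_mul_of_nonneg_left (hC2 x).1 hβpos.le
        have e2 := (hC1 x).2
        rw [hk₂def]
        linarith only [e1, e2]
      have hκz : κ * |z x| ≤ k₁ * m₁ * |z x| := mul_le_mul_of_nonneg_right hκ1 (abs_nonneg _)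
      have hκw : κ * β * |w x| ≤ k₂ * m₂ * |w x| := mul_le_mul_of_nonneg_right hκ2 (abs_nonneg _)
      have h9' : k₁ * (m₁ * |z x|) ≤ k₁ * |u₁ x - u₂ x| := mul_le_mul_of_nonneg_left h9 hk₁pos.le
      have h10' : k₂ * (m₂ * |w x|) ≤ k₂ * |v₁ x - v₂ x| := mul_le_mul_of_nonneg_left h10 hk₂pos.le
      show Lz + β * Lw ≤ -κ * Vf x
      simp only [hVdef]
      linarith only [hLzb, hs1, hco1, hco2, hκz, hκw, h9', h10']
  -- exponential decay of Vf
  have hdec := lv_decay hκpos hVcont hV0 hslope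
  have hBndT : Filter.Tendsto (fun t : ℝ => (Vf T₅ + 1) * Real.exp (-(κ/2) * (t - T₅)))
      Filter.atTop (nhds 0) := by
    have h1 : Filter.Tendsto (fun t : ℝ => t - T₅) Filter.atTop Filter.atTop :=
      tendsto_atTop_add_const_right _ _ tendsto_id
    have h2 : Filter.Tendsto (fun t : ℝ => (κ/2) * (t - T₅)) Filter.atTop Filter.atTop :=
      h1.const_mul_atTop (by positivity)
    have h3 : Filter.Tendsto (fun t : ℝ => -(κ/2) * (t - T₅)) Filter.atTop Filter.atBot := by
      have h := tendsto_neg_atTop_atBot.comp h2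
      have heq : (fun t : ℝ => -(κ/2) * (t - T₅)) = (fun x : ℝ => -(κ/2 * (x - T₅))) := by
        funext t; ring
      rw [heq]
      exact h
    have h4 : Filter.Tendsto (fun t : ℝ => Real.exp (-(κ/2) * (t - T₅)))
        Filter.atTop (nhds 0) := Real.tendsto_exp_atBot.comp h3
    have h5 := h4.const_mul (Vf T₅ + 1)
    simpa using h5
  constructor
  · -- u₁ - u₂ → 0
    have hub : ∀ᶠ t in Filter.atTop,
        |u₁ t - u₂ t| ≤ M₁ * ((Vf T₅ + 1) * Real.exp (-(κ/2) * (t - T₅))) := by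
      filter_upwards [eventually_ge_atTop T₅] with t ht
      obtain ⟨hulb, _⟩ := lv_log_bounds hm₁pos (hU₁l t ht) (hU₂l t ht) (hU₁ t ht) (hU₂ t ht)
      have h1 : |u₁ t - u₂ t| ≤ M₁ * |z t| := by
        have h := (div_le_iff₀ hM₁pos).1 hulb
        simp only [hzdef]
        linarith only [h]
      have h2 : |z t| ≤ Vf t := by
        simp only [hVdef]
        linarith only [mul_nonneg hβpos.le (abs_nonneg (w t))]
      have h3 := hdec t ht
      calc |u₁ t - u₂ t| ≤ M₁ * |z t| := h1
        _ ≤ M₁ * Vf t := mul_le_mul_of_nonneg_left h2 hM₁pos.le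
        _ ≤ M₁ * ((Vf T₅ + 1) * Real.exp (-(κ/2) * (t - T₅))) :=
            mul_le_mul_of_nonneg_left h3 hM₁pos.le
    have hgh : Filter.Tendsto (fun t => M₁ * ((Vf T₅ + 1) * Real.exp (-(κ/2) * (t - T₅))))
        Filter.atTop (nhds 0) := by simpa using hBndT.const_mul M₁
    have hgneg : Filter.Tendsto (fun t => -(M₁ * ((Vf T₅ + 1) * Real.exp (-(κ/2) * (t - T₅)))))
        Filter.atTop (nhds 0) := by simpa using hgh.neg
    exact tendsto_of_tendsto_of_tendsto_of_le_of_le' hgneg hgh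
      (hub.mono fun t h => (abs_le.1 h).1) (hub.mono fun t h => (abs_le.1 h).2)
  · -- v₁ - v₂ → 0
    have hub : ∀ᶠ t in Filter.atTop,
        |v₁ t - v₂ t| ≤ M₂ / β * ((Vf T₅ + 1) * Real.exp (-(κ/2) * (t - T₅))) := by
      filter_upwards [eventually_ge_atTop T₅] with t ht
      obtain ⟨hvlb, _⟩ := lv_log_bounds hm₂pos (hV₁l t ht) (hV₂l t ht) (hV₁ t ht) (hV₂ t ht)
      have h1 : |v₁ t - v₂ t| ≤ M₂ * |w t| := by
        have h := (div_le_iff₀ hM₂pos).1 hvlb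
        simp only [hwdef]
        linarith only [h]
      have h2 : β * |w t| ≤ Vf t := by
        simp only [hVdef]
        linarith only [abs_nonneg (z t)]
      have h3 := hdec t ht
      have h4 : |w t| ≤ Vf t / β := (le_div_iff₀ hβpos).2 (by linarith only [h2])
      have h5 : Vf t / β ≤ (Vf T₅ + 1) * Real.exp (-(κ/2) * (t - T₅)) / β := by
        gcongr
      have h6 : |w t| ≤ (Vf T₅ + 1) * Real.exp (-(κ/2) * (t - T₅)) / β := le_trans h4 h5
      calc |v₁ t - v₂ t| ≤ M₂ * |w t| := h1
        _ ≤ M₂ * ((Vf T₅ + 1) * Real.exp (-(κ/2) * (t - T₅)) / β) :=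
            mul_le_mul_of_nonneg_left h6 hM₂pos.le
        _ = M₂ / β * ((Vf T₅ + 1) * Real.exp (-(κ/2) * (t - T₅))) := by ring
    have hgh : Filter.Tendsto (fun t => M₂ / β * ((Vf T₅ + 1) * Real.exp (-(κ/2) * (t - T₅))))
        Filter.atTop (nhds 0) := by simpa using hBndT.const_mul (M₂ / β)
    have hgneg : Filter.Tendsto (fun t => -(M₂ / β * ((Vf T₅ + 1) * Real.exp (-(κ/2) * (t - T₅)))))
        Filter.atTop (nhds 0) := by simpa using hgh.neg
    exact tendsto_of_tendsto_of_tendsto_of_le_of_le' hgneg hgh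
      (hub.mono fun t h => (abs_le.1 h).1) (hub.mono fun t h => (abs_le.1 h).2)
end

section
/- For every t₀ ∈ ℝ there exists a solution (u₀(t), v₀(t)) of the Lotka–Volterra competition system defined for all t ≥ t₀ such that 0 < (a₁^L c₂^L − c₁^M a₂^M)/(b₁^M c₂^L − c₁^M b₂^L) ≤ u₀(t) ≤ (a₁^M c₂^M − c₁^L a₂^L)/(b₁^L c₂^M − c₁^L b₂^M) and 0 < (b₁^L a₂^L − a₁^M b₂^M)/(b₁^L c₂^M − c₁^L b₂^M) ≤ v₀(t) ≤ (b₁^M a₂^M − a₁^L b₂^L)/(b₁^M c₂^L − c₁^M b₂^L) for all t ≥ t₀. -/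
open Set

namespace LVAux

noncomputable def clamp (lo hi x : ℝ) : ℝ := max lo (min x hi)

lemma clamp_mem {lo hi : ℝ} (h : lo ≤ hi) (x : ℝ) : clamp lo hi x ∈ Icc lo hi := by
  unfold clamp
  constructor
  · exact le_max_left _ _
  · exact max_le h (min_le_right _ _)

lemma clamp_of_mem {lo hi x : ℝ} (h : x ∈ Icc lo hi) : clamp lo hi x = x := by
  unfold clamp
  rw [min_eq_left h.2, max_eq_right h.1]

lemma clamp_of_le {lo hi x : ℝ} (h : lo ≤ hi) (hx : x ≤ lo) : clamp lo hi x = lo := by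
  unfold clamp
  rw [max_eq_left]
  exact le_trans (min_le_left _ _) hx

lemma clamp_of_ge {lo hi x : ℝ} (h : lo ≤ hi) (hx : hi ≤ x) : clamp lo hi x = hi := by
  unfold clamp
  rw [min_eq_right hx, max_eq_right h]

lemma abs_clamp_sub_clamp (lo hi x y : ℝ) : |clamp lo hi x - clamp lo hi y| ≤ |x - y| := by
  unfold clamp
  rw [max_comm lo (min x hi), max_comm lo (min y hi)]
  refine le_trans (abs_max_sub_max_le_abs _ _ _) ?_
  have := abs_min_sub_min_le_max x hi y hi
  simpa using this

/-- Fencing: stay above a constant. -/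
lemma stay_above {u u' : ℝ → ℝ} {a b m : ℝ}
    (hc : ContinuousOn u (Icc a b))
    (hd : ∀ x ∈ Ico a b, HasDerivWithinAt u (u' x) (Ici x) x)
    (hstart : m ≤ u a)
    (hsign : ∀ x ∈ Ico a b, u x ≤ m → 0 ≤ u' x) :
    ∀ x ∈ Icc a b, m ≤ u x := by
  intro x hx
  have key : ∀ ε > (0:ℝ), m - u x ≤ ε * (1 + (x - a)) := by
    intro ε hε
    have := image_le_of_deriv_right_lt_deriv_boundary
      (f := fun t => m - u t) (f' := fun t => -(u' t)) (B := fun t => ε * (1 + (t - a)))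
      (B' := fun _ => ε) (a := a) (b := b)
      (continuousOn_const.sub hc)
      (fun y hy => ((hd y hy).const_sub m))
      (by simp; nlinarith)
      (fun y => by
        have : HasDerivAt (fun t => ε * (1 + (t - a))) (ε * 1) y :=
          (((hasDerivAt_id y).sub_const a).const_add 1).const_mul ε
        simpa using this)
      (fun y hy hEq => by
        have hypos : 0 < ε * (1 + (y - a)) := by
          have : 0 ≤ y - a := sub_nonneg.2 hy.1
          nlinarith
        have huy : u y ≤ m := by nlinarith [hEq]
        have := hsign y hy huy
        linarith)
      hx
    simpa using this
  have hxa : (0:ℝ) < 1 + (x - a) := by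
    have : 0 ≤ x - a := sub_nonneg.2 hx.1
    linarith
  by_contra hcon
  push_neg at hcon
  have hpos : 0 < m - u x := by linarith
  have := key ((m - u x) / (2 * (1 + (x - a)))) (by positivity)
  rw [div_mul_eq_mul_div, mul_comm] at this
  have h2 : (1 + (x - a)) * (m - u x) / (2 * (1 + (x - a))) = (m - u x) / 2 := by
    field_simp
  rw [h2] at this
  linarith

lemma stay_below {u u' : ℝ → ℝ} {a b M : ℝ}
    (hc : ContinuousOn u (Icc a b))
    (hd : ∀ x ∈ Ico a b, HasDerivWithinAt u (u' x) (Ici x) x)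
    (hstart : u a ≤ M)
    (hsign : ∀ x ∈ Ico a b, M ≤ u x → u' x ≤ 0) :
    ∀ x ∈ Icc a b, u x ≤ M := by
  have := stay_above (u := fun t => -(u t)) (u' := fun t => -(u' t)) (a := a) (b := b) (m := -M)
    (hc.neg) (fun x hx => (hd x hx).neg) (by linarith)
    (fun x hx hux => by
      have : M ≤ u x := by linarith
      have := hsign x hx this
      linarith)
  intro x hx
  have h2 := this x hx
  linarith

/-- extract first component derivative -/
lemma hasDerivWithinAt_fst {f : ℝ → ℝ × ℝ} {d : ℝ × ℝ} {s : Set ℝ} {x : ℝ}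
    (h : HasDerivWithinAt f d s x) : HasDerivWithinAt (fun t => (f t).1) d.1 s x := by
  have h2 := h.hasFDerivWithinAt.fst
  have := h2.hasDerivWithinAt
  simpa using this

lemma hasDerivWithinAt_snd {f : ℝ → ℝ × ℝ} {d : ℝ × ℝ} {s : Set ℝ} {x : ℝ}
    (h : HasDerivWithinAt f d s x) : HasDerivWithinAt (fun t => (f t).2) d.2 s x := by
  have h2 := h.hasFDerivWithinAt.snd
  have := h2.hasDerivWithinAt
  simpa using this


lemma quad_lip {aM bM cM U V a b c p p' q q' Δ : ℝ}
    (ha0 : 0 ≤ a) (ha : a ≤ aM) (hb0 : 0 ≤ b) (hb : b ≤ bM) (hc0 : 0 ≤ c) (hc : c ≤ cM)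
    (hp : p ∈ Icc 0 U) (hp' : p' ∈ Icc 0 U) (hq : q ∈ Icc 0 V) (hq' : q' ∈ Icc 0 V)
    (hd1 : |p - p'| ≤ Δ) (hd2 : |q - q'| ≤ Δ) :
    |p * (a - b * p - c * q) - p' * (a - b * p' - c * q')|
      ≤ (aM + 2 * bM * U + cM * V + cM * U) * Δ := by
  have hΔ : 0 ≤ Δ := le_trans (abs_nonneg _) hd1
  have hU : 0 ≤ U := le_trans hp.1 hp.2
  have hV : 0 ≤ V := le_trans hq.1 hq.2
  have haM : 0 ≤ aM := le_trans ha0 ha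
  have hbM : 0 ≤ bM := le_trans hb0 hb
  have hcM : 0 ≤ cM := le_trans hc0 hc
  have e : p * (a - b * p - c * q) - p' * (a - b * p' - c * q')
      = (p - p') * (a - b * (p + p') - c * q') - (c * p) * (q - q') := by ring
  rw [e]
  have hbp : b * (p + p') ≤ bM * (2 * U) := by nlinarith [hp.1, hp.2, hp'.1, hp'.2]
  have hbp0 : 0 ≤ b * (p + p') := by nlinarith [hp.1, hp'.1]
  have hcq : c * q' ≤ cM * V := by nlinarith [hq'.1, hq'.2]
  have hcq0 : 0 ≤ c * q' := mul_nonneg hc0 hq'.1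
  have h1 : |(p - p') * (a - b * (p + p') - c * q')| ≤ Δ * (aM + 2 * bM * U + cM * V) := by
    rw [abs_mul]
    apply mul_le_mul hd1 ?_ (abs_nonneg _) hΔ
    rw [abs_le]
    constructor
    · nlinarith
    · nlinarith
  have h2 : |(c * p) * (q - q')| ≤ (cM * U) * Δ := by
    rw [abs_mul]
    apply mul_le_mul ?_ hd2 (abs_nonneg _) (by positivity)
    rw [abs_of_nonneg (mul_nonneg hc0 hp.1)]
    nlinarith [hp.1, hp.2]
  have h3 := abs_sub ((p - p') * (a - b * (p + p') - c * q')) ((c * p) * (q - q'))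
  nlinarith [h3]

lemma quad_bound {aM bM cM U V a b c p q : ℝ}
    (ha0 : 0 ≤ a) (ha : a ≤ aM) (hb0 : 0 ≤ b) (hb : b ≤ bM) (hc0 : 0 ≤ c) (hc : c ≤ cM)
    (hp : p ∈ Icc 0 U) (hq : q ∈ Icc 0 V) :
    |p * (a - b * p - c * q)| ≤ U * (aM + bM * U + cM * V) := by
  have hU : 0 ≤ U := le_trans hp.1 hp.2
  have hV : 0 ≤ V := le_trans hq.1 hq.2
  have haM : 0 ≤ aM := le_trans ha0 ha
  have hbM : 0 ≤ bM := le_trans hb0 hb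
  have hcM : 0 ≤ cM := le_trans hc0 hc
  rw [abs_mul]
  apply mul_le_mul ?_ ?_ (abs_nonneg _) hU
  · rw [abs_of_nonneg hp.1]; exact hp.2
  · rw [abs_le]
    constructor
    · nlinarith [hp.1, hp.2, hq.1, hq.2]
    · nlinarith [hp.1, hp.2, hq.1, hq.2]


lemma glue_solutions {F : ℝ → ℝ × ℝ → ℝ × ℝ} {K : Set (ℝ × ℝ)} (t₀ : ℝ) (x₀ : ℝ × ℝ)
    (hx₀ : x₀ ∈ K)
    (hsol : ∀ s : ℝ, ∀ y ∈ K, ∃ f : ℝ → ℝ × ℝ, f s = y ∧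
      (∀ t ∈ Icc s (s + 1), HasDerivWithinAt f (F t (f t)) (Icc s (s + 1)) t) ∧
      (∀ t ∈ Icc s (s + 1), f t ∈ K)) :
    ∃ g : ℝ → ℝ × ℝ, (∀ t ∈ Ici t₀, HasDerivWithinAt g (F t (g t)) (Ici t₀) t) ∧
      ∀ t ∈ Ici t₀, g t ∈ K := by
  classical
  choose sol hsol0 hsolD hsolK using hsol
  -- define the sequence of pieces
  let p : ℕ → (ℝ → ℝ × ℝ) := fun n => Nat.rec (sol t₀ x₀ hx₀)
    (fun n f => if h : f (t₀ + n + 1) ∈ K then sol (t₀ + n + 1) (f (t₀ + n + 1)) h else f) n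
  have hp0 : p 0 = sol t₀ x₀ hx₀ := rfl
  -- invariant
  have Q : ∀ n : ℕ,
      (∀ t ∈ Icc (t₀ + n) (t₀ + n + 1), HasDerivWithinAt (p n) (F t (p n t))
        (Icc (t₀ + n) (t₀ + n + 1)) t) ∧
      (∀ t ∈ Icc (t₀ + n) (t₀ + n + 1), p n t ∈ K) := by
    intro n
    induction n with
    | zero =>
      constructor
      · intro t ht
        have := hsolD t₀ x₀ hx₀ t (by simpa using ht)
        simpa [hp0] using this
      · intro t ht
        have := hsolK t₀ x₀ hx₀ t (by simpa using ht)
        simpa [hp0] using this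
    | succ n ih =>
      have hmem : p n (t₀ + n + 1) ∈ K :=
        ih.2 _ ⟨by linarith [(Nat.cast_nonneg n : (0:ℝ) ≤ n)] , le_refl _⟩
      have hpd : p (n + 1) = sol (t₀ + n + 1) (p n (t₀ + n + 1)) hmem := by
        show (if h : p n (t₀ + n + 1) ∈ K then _ else _) = _
        rw [dif_pos hmem]
      have hcast : (t₀ + (n + 1 : ℕ) : ℝ) = t₀ + n + 1 := by push_cast; ring
      constructor
      · intro t ht
        rw [hcast] at ht ⊢
        rw [hpd]
        exact hsolD _ _ hmem t ht
      · intro t ht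
        rw [hcast] at ht
        rw [hpd]
        exact hsolK _ _ hmem t ht
  -- junction agreement
  have hjunc : ∀ n : ℕ, p (n + 1) (t₀ + n + 1) = p n (t₀ + n + 1) := by
    intro n
    have hmem : p n (t₀ + n + 1) ∈ K :=
      (Q n).2 _ ⟨by linarith [(Nat.cast_nonneg n : (0:ℝ) ≤ n)], le_refl _⟩
    have hpd : p (n + 1) = sol (t₀ + n + 1) (p n (t₀ + n + 1)) hmem := by
      show (if h : p n (t₀ + n + 1) ∈ K then _ else _) = _
      rw [dif_pos hmem]
    rw [hpd, hsol0]
  set g : ℝ → ℝ × ℝ := fun t => p ⌊t - t₀⌋₊ t with hg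
  -- agreement of g with pieces
  have hagree : ∀ n : ℕ, ∀ t ∈ Icc (t₀ + n) (t₀ + n + 1), g t = p n t := by
    intro n t ht
    rcases lt_or_eq_of_le ht.2 with h | h
    · have hfl : ⌊t - t₀⌋₊ = n := by
        rw [Nat.floor_eq_iff (by linarith [(Nat.cast_nonneg n : (0:ℝ) ≤ n), ht.1])]
        constructor
        · push_cast; linarith [ht.1]
        · push_cast; linarith
      simp only [hg, hfl]
    · have hfl : ⌊t - t₀⌋₊ = n + 1 := by
        have : t - t₀ = (n + 1 : ℕ) := by push_cast; linarith
        rw [this, Nat.floor_natCast]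
      simp only [hg, hfl]
      have : t = t₀ + n + 1 := by linarith
      rw [this, hjunc n]
  -- membership
  have hmemIcc : ∀ t ∈ Ici t₀, t ∈ Icc (t₀ + (⌊t - t₀⌋₊ : ℝ)) (t₀ + (⌊t - t₀⌋₊ : ℝ) + 1) := by
    intro t ht
    have h0 : 0 ≤ t - t₀ := sub_nonneg.2 ht
    constructor
    · linarith [Nat.floor_le h0]
    · linarith [Nat.lt_floor_add_one (t - t₀)]
  refine ⟨g, ?_, ?_⟩
  · intro t ht
    obtain ⟨n, hn⟩ : ∃ n : ℕ, ⌊t - t₀⌋₊ = n := ⟨_, rfl⟩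
    have htm : t ∈ Icc (t₀ + (n:ℝ)) (t₀ + n + 1) := by rw [← hn]; exact hmemIcc t ht
    have hgt : g t = p n t := hagree n t htm
    have hR : HasDerivWithinAt g (F t (g t)) (Icc (t₀ + n) (t₀ + n + 1)) t := by
      have := (Q n).1 t htm
      rw [← hgt] at this
      exact this.congr (fun y hy => hagree n y hy) hgt
    have hub : t < t₀ + n + 1 := by
      have : t - t₀ < ⌊t - t₀⌋₊ + 1 := Nat.lt_floor_add_one (t - t₀)
      rw [hn] at this
      linarith
    rcases lt_or_eq_of_le htm.1 with hlt | heq2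
    · exact hR.mono_of_mem_nhdsWithin (mem_nhdsWithin_of_mem_nhds (Icc_mem_nhds hlt hub))
    · cases n with
      | zero =>
        have ht0 : t = t₀ := by push_cast at heq2; linarith
        have hmem2 : Icc (t₀ + ((0:ℕ):ℝ)) (t₀ + ((0:ℕ):ℝ) + 1) ∈ nhdsWithin t (Ici t₀) := by
          have he : Icc (t₀ + ((0:ℕ):ℝ)) (t₀ + ((0:ℕ):ℝ) + 1) = Ici t₀ ∩ Iic (t₀ + 1) := by
            push_cast
            rw [Ici_inter_Iic]
            norm_num
          rw [he]
          exact Filter.inter_mem self_mem_nhdsWithin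
            (nhdsWithin_le_nhds (Iic_mem_nhds (by rw [ht0]; linarith)))
        exact hR.mono_of_mem_nhdsWithin hmem2
      | succ m =>
        push_cast at heq2
        have htm' : t ∈ Icc (t₀ + (m:ℝ)) (t₀ + m + 1) := by
          constructor
          · linarith
          · linarith
        have hL : HasDerivWithinAt g (F t (g t)) (Icc (t₀ + m) (t₀ + m + 1)) t := by
          have hgt' : g t = p m t := hagree m t htm'
          have := (Q m).1 t htm'
          rw [← hgt'] at this
          exact this.congr (fun y hy => hagree m y hy) hgt'
        have hU := hL.union hR
        refine hU.mono_of_mem_nhdsWithin (mem_nhdsWithin_of_mem_nhds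
          (Filter.mem_of_superset (Ioo_mem_nhds (show t₀ + (m:ℝ) < t by linarith)
            (show t < t₀ + ((m+1:ℕ):ℝ) + 1 from hub)) ?_))
        intro y hy
        rcases le_total y (t₀ + (m:ℝ) + 1) with h | h
        · exact Or.inl ⟨le_of_lt hy.1, h⟩
        · refine Or.inr ⟨by push_cast; linarith, le_of_lt hy.2⟩
  · intro t ht
    have htm := hmemIcc t ht
    rw [hagree _ t htm]
    exact (Q _).2 t htm


set_option maxHeartbeats 2000000 in
theorem main_aux (a₁ b₁ c₁ a₂ b₂ c₂ : ℝ → ℝ)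
    (ha₁ : Continuous a₁) (hb₁ : Continuous b₁) (hc₁ : Continuous c₁)
    (ha₂ : Continuous a₂) (hb₂ : Continuous b₂) (hc₂ : Continuous c₂)
    (a1L a1M b1L b1M c1L c1M a2L a2M b2L b2M c2L c2M : ℝ)
    (h1 : ∀ t, a1L ≤ a₁ t) (h2 : ∀ t, a₁ t ≤ a1M)
    (h3 : ∀ t, b1L ≤ b₁ t) (h4 : ∀ t, b₁ t ≤ b1M)
    (h5 : ∀ t, c1L ≤ c₁ t) (h6 : ∀ t, c₁ t ≤ c1M)
    (h7 : ∀ t, a2L ≤ a₂ t) (h8 : ∀ t, a₂ t ≤ a2M)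
    (h9 : ∀ t, b2L ≤ b₂ t) (h10 : ∀ t, b₂ t ≤ b2M)
    (h11 : ∀ t, c2L ≤ c₂ t) (h12 : ∀ t, c₂ t ≤ c2M)
    (pa1 : 0 < a1L) (pb1 : 0 < b1L) (pc1 : 0 < c1L)
    (pa2 : 0 < a2L) (pb2 : 0 < b2L) (pc2 : 0 < c2L)
    (cond1 : c1M * a2M < a1L * c2L) (cond2 : a1M * b2M < b1L * a2L)
    (t₀ : ℝ) :
    ∃ u v : ℝ → ℝ,
      (∀ t ∈ Set.Ici t₀,
        HasDerivWithinAt u (u t * (a₁ t - b₁ t * u t - c₁ t * v t)) (Set.Ici t₀) t ∧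
        HasDerivWithinAt v (v t * (a₂ t - b₂ t * u t - c₂ t * v t)) (Set.Ici t₀) t) ∧
      0 < (a1L * c2L - c1M * a2M) / (b1M * c2L - c1M * b2L) ∧
      0 < (b1L * a2L - a1M * b2M) / (b1L * c2M - c1L * b2M) ∧
      ∀ t ∈ Set.Ici t₀,
        (a1L * c2L - c1M * a2M) / (b1M * c2L - c1M * b2L) ≤ u t ∧
        u t ≤ (a1M * c2M - c1L * a2L) / (b1L * c2M - c1L * b2M) ∧
        (b1L * a2L - a1M * b2M) / (b1L * c2M - c1L * b2M) ≤ v t ∧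
        v t ≤ (b1M * a2M - a1L * b2L) / (b1M * c2L - c1M * b2L) := by
  have ea1 : a1L ≤ a1M := le_trans (h1 0) (h2 0)
  have eb1 : b1L ≤ b1M := le_trans (h3 0) (h4 0)
  have ec1 : c1L ≤ c1M := le_trans (h5 0) (h6 0)
  have ea2 : a2L ≤ a2M := le_trans (h7 0) (h8 0)
  have eb2 : b2L ≤ b2M := le_trans (h9 0) (h10 0)
  have ec2 : c2L ≤ c2M := le_trans (h11 0) (h12 0)
  have pa1M : 0 < a1M := lt_of_lt_of_le pa1 ea1
  have pa2M : 0 < a2M := lt_of_lt_of_le pa2 ea2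
  have pb1M : 0 < b1M := lt_of_lt_of_le pb1 eb1
  have pc1M : 0 < c1M := lt_of_lt_of_le pc1 ec1
  have pb2M : 0 < b2M := lt_of_lt_of_le pb2 eb2
  have pc2M : 0 < c2M := lt_of_lt_of_le pc2 ec2
  have key : c1M * b2M < b1L * c2L := by
    have hm : (c1M * a2M) * (a1M * b2M) < (a1L * c2L) * (b1L * a2L) := by
      apply mul_lt_mul'' cond1 cond2 <;> positivity
    have haa : a1L * a2L ≤ a1M * a2M := by nlinarith
    have h1' : (a1L * c2L) * (b1L * a2L) ≤ (a1M * a2M) * (c2L * b1L) := by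
      nlinarith [mul_le_mul_of_nonneg_left haa (mul_pos pc2 pb1).le]
    have h2' : (c1M * a2M) * (a1M * b2M) = (a1M * a2M) * (c1M * b2M) := by ring
    rw [h2'] at hm
    have hmm := lt_of_lt_of_le hm h1'
    have hpos : 0 < a1M * a2M := by positivity
    nlinarith
  have hDlo : 0 < b1M * c2L - c1M * b2L := by nlinarith
  have hDhi : 0 < b1L * c2M - c1L * b2M := by nlinarith
  have hDlo' : b1M * c2L - c1M * b2L ≠ 0 := ne_of_gt hDlo
  have hDhi' : b1L * c2M - c1L * b2M ≠ 0 := ne_of_gt hDhi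
  obtain ⟨us, hus⟩ : ∃ x : ℝ, x = (a1L * c2L - c1M * a2M) / (b1M * c2L - c1M * b2L) := ⟨_, rfl⟩
  obtain ⟨uS, huS⟩ : ∃ x : ℝ, x = (a1M * c2M - c1L * a2L) / (b1L * c2M - c1L * b2M) := ⟨_, rfl⟩
  obtain ⟨vs, hvs⟩ : ∃ x : ℝ, x = (b1L * a2L - a1M * b2M) / (b1L * c2M - c1L * b2M) := ⟨_, rfl⟩
  obtain ⟨vS, hvS⟩ : ∃ x : ℝ, x = (b1M * a2M - a1L * b2L) / (b1M * c2L - c1M * b2L) := ⟨_, rfl⟩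
  have hus_pos : 0 < us := hus ▸ div_pos (by linarith) hDlo
  have huS_pos : 0 < uS := huS ▸ div_pos (by nlinarith) hDhi
  have hvs_pos : 0 < vs := hvs ▸ div_pos (by linarith) hDhi
  have hvS_pos : 0 < vS := hvS ▸ div_pos (by nlinarith) hDlo
  have I1 : b1M * us + c1M * vS = a1L := by
    rw [hus, hvS]
    field_simp
    ring
  have I2 : b1L * uS + c1L * vs = a1M := by
    rw [huS, hvs]
    field_simp
    ring
  have I3 : b2L * us + c2L * vS = a2M := by
    rw [hus, hvS, mul_div_assoc', mul_div_assoc', ← add_div, div_eq_iff hDlo']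
    ring
  have I4 : b2M * uS + c2M * vs = a2L := by
    rw [huS, hvs, mul_div_assoc', mul_div_assoc', ← add_div, div_eq_iff hDhi']
    ring
  have step1 : c1L * (vS - vs) ≤ b1L * (uS - us) := by
    have hh1 : c1L * vS ≤ c1M * vS := mul_le_mul_of_nonneg_right ec1 hvS_pos.le
    have hh2 : b1L * us ≤ b1M * us := mul_le_mul_of_nonneg_right eb1 hus_pos.le
    linarith [I1, I2, ea1]
  have step2 : b2M * (uS - us) ≤ c2L * (vS - vs) := by
    have hh1 : c2L * vs ≤ c2M * vs := mul_le_mul_of_nonneg_right ec2 hvs_pos.le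
    have hh2 : b2L * us ≤ b2M * us := mul_le_mul_of_nonneg_right eb2 hus_pos.le
    linarith [I3, I4, ea2]
  have hX : us ≤ uS := by
    by_contra hX
    push_neg at hX
    have hco : 0 < b1L * c2L - c1L * b2M := by
      have h9' : c1L * b2M ≤ c1M * b2M := mul_le_mul_of_nonneg_right ec1 pb2M.le
      linarith [key]
    have hint1 := mul_le_mul_of_nonneg_left step1 pc2.le
    have hint2 := mul_le_mul_of_nonneg_left step2 pc1.le
    have hint3 := mul_pos hco (sub_pos.2 hX)
    linarith [hint1, hint2, hint3]
  have hY : vs ≤ vS := by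
    by_contra hY
    push_neg at hY
    have h1'' := mul_pos pc2 (sub_pos.2 hY)
    have h2'' := mul_nonneg pb2M.le (sub_nonneg.2 hX)
    linarith [step2, h1'', h2'']
  -- the clamped vector field
  obtain ⟨F, hF⟩ : ∃ F : ℝ → ℝ × ℝ → ℝ × ℝ, F = fun t x =>
      (clamp us uS x.1 * (a₁ t - b₁ t * clamp us uS x.1 - c₁ t * clamp vs vS x.2),
       clamp vs vS x.2 * (a₂ t - b₂ t * clamp us uS x.1 - c₂ t * clamp vs vS x.2)) := ⟨_, rfl⟩
  have memu : ∀ z : ℝ, clamp us uS z ∈ Icc (0:ℝ) uS :=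
    fun z => ⟨le_trans hus_pos.le (clamp_mem hX z).1, (clamp_mem hX z).2⟩
  have memv : ∀ z : ℝ, clamp vs vS z ∈ Icc (0:ℝ) vS :=
    fun z => ⟨le_trans hvs_pos.le (clamp_mem hY z).1, (clamp_mem hY z).2⟩
  -- sign conditions
  have S1 : ∀ (t : ℝ) (x : ℝ × ℝ), x.1 ≤ us → 0 ≤ (F t x).1 := by
    intro t x hx1
    rw [hF]
    dsimp only
    rw [clamp_of_le hX hx1]
    have hw := clamp_mem hY x.2
    apply mul_nonneg hus_pos.le
    have hbb : b₁ t * us ≤ b1M * us := mul_le_mul_of_nonneg_right (h4 t) hus_pos.le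
    have hcc : c₁ t * clamp vs vS x.2 ≤ c1M * vS :=
      mul_le_mul (h6 t) hw.2 (le_trans hvs_pos.le hw.1) pc1M.le
    linarith [h1 t, I1]
  have S2 : ∀ (t : ℝ) (x : ℝ × ℝ), uS ≤ x.1 → (F t x).1 ≤ 0 := by
    intro t x hx1
    rw [hF]
    dsimp only
    rw [clamp_of_ge hX hx1]
    have hw := clamp_mem hY x.2
    have hbb : b1L * uS ≤ b₁ t * uS := mul_le_mul_of_nonneg_right (h3 t) huS_pos.le
    have hcc : c1L * vs ≤ c₁ t * clamp vs vS x.2 :=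
      mul_le_mul (h5 t) hw.1 hvs_pos.le (le_trans pc1.le (h5 t))
    have hfac : a₁ t - b₁ t * uS - c₁ t * clamp vs vS x.2 ≤ 0 := by linarith [h2 t, I2]
    have := mul_nonneg huS_pos.le (neg_nonneg.2 hfac)
    linarith [this]
  have S3 : ∀ (t : ℝ) (x : ℝ × ℝ), x.2 ≤ vs → 0 ≤ (F t x).2 := by
    intro t x hx2
    rw [hF]
    dsimp only
    rw [clamp_of_le hY hx2]
    have hz := clamp_mem hX x.1
    apply mul_nonneg hvs_pos.le
    have hbb : b₂ t * clamp us uS x.1 ≤ b2M * uS :=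
      mul_le_mul (h10 t) hz.2 (le_trans hus_pos.le hz.1) pb2M.le
    have hcc : c₂ t * vs ≤ c2M * vs := mul_le_mul_of_nonneg_right (h12 t) hvs_pos.le
    linarith [h7 t, I4]
  have S4 : ∀ (t : ℝ) (x : ℝ × ℝ), vS ≤ x.2 → (F t x).2 ≤ 0 := by
    intro t x hx2
    rw [hF]
    dsimp only
    rw [clamp_of_ge hY hx2]
    have hz := clamp_mem hX x.1
    have hbb : b2L * us ≤ b₂ t * clamp us uS x.1 :=
      mul_le_mul (h9 t) hz.1 hus_pos.le (le_trans pb2.le (h9 t))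
    have hcc : c2L * vS ≤ c₂ t * vS := mul_le_mul_of_nonneg_right (h11 t) hvS_pos.le
    have hfac : a₂ t - b₂ t * clamp us uS x.1 - c₂ t * vS ≤ 0 := by linarith [h8 t, I3]
    have := mul_nonneg hvS_pos.le (neg_nonneg.2 hfac)
    linarith [this]
  -- per-interval solutions
  have hstep : ∀ s : ℝ, ∀ y ∈ (Icc us uS ×ˢ Icc vs vS : Set (ℝ × ℝ)),
      ∃ f : ℝ → ℝ × ℝ, f s = y ∧
      (∀ t ∈ Icc s (s + 1), HasDerivWithinAt f (F t (f t)) (Icc s (s + 1)) t) ∧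
      (∀ t ∈ Icc s (s + 1), f t ∈ (Icc us uS ×ˢ Icc vs vS : Set (ℝ × ℝ))) := by
    intro s y hy
    obtain ⟨Λ, hΛ⟩ : ∃ x : ℝ, x = (a1M + 2 * b1M * uS + c1M * vS + c1M * uS)
        + (a2M + 2 * c2M * vS + b2M * uS + b2M * vS) := ⟨_, rfl⟩
    have hprods : 0 ≤ b1M * uS ∧ 0 ≤ c1M * vS ∧ 0 ≤ c1M * uS ∧ 0 ≤ c2M * vS ∧ 0 ≤ b2M * uS
        ∧ 0 ≤ b2M * vS ∧ 0 ≤ b1M * uS := by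
      refine ⟨?_, ?_, ?_, ?_, ?_, ?_, ?_⟩ <;> positivity
    have hΛ0 : 0 ≤ Λ := by
      rw [hΛ]
      linarith only [hprods.1, hprods.2.1, hprods.2.2.1, hprods.2.2.2.1, hprods.2.2.2.2.1,
        hprods.2.2.2.2.2.1, pa1M.le, pa2M.le]
    obtain ⟨Cb, hCb⟩ : ∃ x : ℝ, x = uS * (a1M + b1M * uS + c1M * vS)
        + vS * (a2M + b2M * uS + c2M * vS) := ⟨_, rfl⟩
    have hCb0 : 0 ≤ Cb := by
      rw [hCb]
      have e1 : 0 ≤ uS * (a1M + b1M * uS + c1M * vS) := by positivity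
      have e2 : 0 ≤ vS * (a2M + b2M * uS + c2M * vS) := by positivity
      linarith
    have hlip : ∀ t : ℝ, LipschitzWith (Real.toNNReal Λ) (F t) := by
      intro t
      apply LipschitzWith.of_dist_le_mul
      intro x y'
      rw [Real.coe_toNNReal _ hΛ0]
      have hdx : dist x.1 y'.1 ≤ dist x y' := by rw [Prod.dist_eq]; exact le_max_left _ _
      have hdy : dist x.2 y'.2 ≤ dist x y' := by rw [Prod.dist_eq]; exact le_max_right _ _
      have hd1 : |clamp us uS x.1 - clamp us uS y'.1| ≤ dist x y' :=
        le_trans (abs_clamp_sub_clamp _ _ _ _) (le_trans (le_of_eq (Real.dist_eq _ _).symm) hdx)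
      have hd2 : |clamp vs vS x.2 - clamp vs vS y'.2| ≤ dist x y' :=
        le_trans (abs_clamp_sub_clamp _ _ _ _) (le_trans (le_of_eq (Real.dist_eq _ _).symm) hdy)
      rw [Prod.dist_eq, hF]
      dsimp only
      apply max_le
      · rw [Real.dist_eq]
        refine le_trans (quad_lip (le_trans pa1.le (h1 t)) (h2 t) (le_trans pb1.le (h3 t))
          (h4 t) (le_trans pc1.le (h5 t)) (h6 t) (memu x.1) (memu y'.1) (memv x.2) (memv y'.2)
          hd1 hd2) ?_
        apply mul_le_mul_of_nonneg_right ?_ dist_nonneg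
        rw [hΛ]
        linarith only [hprods.2.2.2.1, hprods.2.2.2.2.1, hprods.2.2.2.2.2.1, pa2M.le]
      · rw [Real.dist_eq]
        rw [show clamp vs vS x.2 * (a₂ t - b₂ t * clamp us uS x.1 - c₂ t * clamp vs vS x.2)
            = clamp vs vS x.2 * (a₂ t - c₂ t * clamp vs vS x.2 - b₂ t * clamp us uS x.1)
            from by ring,
          show clamp vs vS y'.2 * (a₂ t - b₂ t * clamp us uS y'.1 - c₂ t * clamp vs vS y'.2)
            = clamp vs vS y'.2 * (a₂ t - c₂ t * clamp vs vS y'.2 - b₂ t * clamp us uS y'.1)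
            from by ring]
        refine le_trans (quad_lip (le_trans pa2.le (h7 t)) (h8 t) (le_trans pc2.le (h11 t))
          (h12 t) (le_trans pb2.le (h9 t)) (h10 t) (memv x.2) (memv y'.2) (memu x.1) (memu y'.1)
          hd2 hd1) ?_
        apply mul_le_mul_of_nonneg_right ?_ dist_nonneg
        rw [hΛ]
        linarith only [hprods.1, hprods.2.1, hprods.2.2.1, pa1M.le]
    have hnorm : ∀ (t : ℝ) (x : ℝ × ℝ), ‖F t x‖ ≤ Cb := by
      intro t x
      rw [hF]
      dsimp only
      rw [Prod.norm_def]
      apply max_le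
      · rw [Real.norm_eq_abs]
        refine le_trans (quad_bound (le_trans pa1.le (h1 t)) (h2 t) (le_trans pb1.le (h3 t))
          (h4 t) (le_trans pc1.le (h5 t)) (h6 t) (memu x.1) (memv x.2)) ?_
        rw [hCb]
        have e2 : 0 ≤ vS * (a2M + b2M * uS + c2M * vS) := by positivity
        linarith
      · rw [Real.norm_eq_abs]
        rw [show clamp vs vS x.2 * (a₂ t - b₂ t * clamp us uS x.1 - c₂ t * clamp vs vS x.2)
            = clamp vs vS x.2 * (a₂ t - c₂ t * clamp vs vS x.2 - b₂ t * clamp us uS x.1)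
            from by ring]
        refine le_trans (quad_bound (le_trans pa2.le (h7 t)) (h8 t) (le_trans pc2.le (h11 t))
          (h12 t) (le_trans pb2.le (h9 t)) (h10 t) (memv x.2) (memu x.1)) ?_
        rw [hCb]
        have e1 : 0 ≤ uS * (a1M + b1M * uS + c1M * vS) := by positivity
        linarith
    have hpl : IsPicardLindelof F (tmin := s) (tmax := s + 1) ⟨s, le_refl s, by linarith⟩ y
        (Real.toNNReal Cb) 0 (Real.toNNReal Cb) (Real.toNNReal Λ) :=
      { lipschitzOnWith := fun t _ => (hlip t).lipschitzOnWith
        continuousOn := fun x _ => by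
          apply Continuous.continuousOn
          rw [hF]
          exact ((continuous_const.mul ((ha₁.sub (hb₁.mul continuous_const)).sub
              (hc₁.mul continuous_const))).prodMk
            (continuous_const.mul ((ha₂.sub (hb₂.mul continuous_const)).sub
              (hc₂.mul continuous_const))))
        norm_le := fun t _ x _ => by rw [Real.coe_toNNReal _ hCb0]; exact hnorm t x
        mul_max_le := by
          norm_num [Real.coe_toNNReal _ hCb0] }
    obtain ⟨f, hf0, hfD⟩ : ∃ f : ℝ → ℝ × ℝ, f s = y ∧
        ∀ t ∈ Icc s (s + 1), HasDerivWithinAt f (F t (f t)) (Icc s (s + 1)) t :=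
      hpl.exists_eq_forall_mem_Icc_hasDerivWithinAt₀
    have hmemnhds : ∀ x ∈ Ico s (s + 1), Icc s (s + 1) ∈ nhdsWithin x (Ici x) := by
      intro x hx
      refine Filter.mem_of_superset (Filter.inter_mem self_mem_nhdsWithin
        (nhdsWithin_le_nhds (Iic_mem_nhds hx.2))) ?_
      intro z hz
      exact ⟨le_trans hx.1 hz.1, hz.2⟩
    have hu_cont : ContinuousOn (fun t => (f t).1) (Icc s (s + 1)) :=
      fun t ht => ((hfD t ht).continuousWithinAt).fst
    have hv_cont : ContinuousOn (fun t => (f t).2) (Icc s (s + 1)) :=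
      fun t ht => ((hfD t ht).continuousWithinAt).snd
    have hu_der : ∀ x ∈ Ico s (s + 1),
        HasDerivWithinAt (fun t => (f t).1) ((F x (f x)).1) (Ici x) x :=
      fun x hx => hasDerivWithinAt_fst
        ((hfD x (Ico_subset_Icc_self hx)).mono_of_mem_nhdsWithin (hmemnhds x hx))
    have hv_der : ∀ x ∈ Ico s (s + 1),
        HasDerivWithinAt (fun t => (f t).2) ((F x (f x)).2) (Ici x) x :=
      fun x hx => hasDerivWithinAt_snd
        ((hfD x (Ico_subset_Icc_self hx)).mono_of_mem_nhdsWithin (hmemnhds x hx))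
    have hy1 : y.1 ∈ Icc us uS := hy.1
    have hy2 : y.2 ∈ Icc vs vS := hy.2
    have hu_lo := stay_above hu_cont hu_der (by rw [hf0]; exact hy1.1)
      (fun x _ hle => S1 x (f x) hle)
    have hu_hi := stay_below hu_cont hu_der (by rw [hf0]; exact hy1.2)
      (fun x _ hge => S2 x (f x) hge)
    have hv_lo := stay_above hv_cont hv_der (by rw [hf0]; exact hy2.1)
      (fun x _ hle => S3 x (f x) hle)
    have hv_hi := stay_below hv_cont hv_der (by rw [hf0]; exact hy2.2)
      (fun x _ hge => S4 x (f x) hge)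
    exact ⟨f, hf0, hfD, fun t ht => ⟨⟨hu_lo t ht, hu_hi t ht⟩, ⟨hv_lo t ht, hv_hi t ht⟩⟩⟩
  -- glue
  obtain ⟨g, hgD, hgK⟩ := glue_solutions t₀ (us, vs)
    (show (us, vs) ∈ (Icc us uS ×ˢ Icc vs vS : Set (ℝ × ℝ)) from
      ⟨⟨le_refl us, hX⟩, ⟨le_refl vs, hY⟩⟩) hstep
  refine ⟨fun t => (g t).1, fun t => (g t).2, ?_, hus ▸ hus_pos, hvs ▸ hvs_pos, ?_⟩
  · intro t ht
    have hd := hgD t ht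
    have hk := hgK t ht
    have hk1 : (g t).1 ∈ Icc us uS := hk.1
    have hk2 : (g t).2 ∈ Icc vs vS := hk.2
    have hFe : F t (g t) = ((g t).1 * (a₁ t - b₁ t * (g t).1 - c₁ t * (g t).2),
        (g t).2 * (a₂ t - b₂ t * (g t).1 - c₂ t * (g t).2)) := by
      rw [hF]
      dsimp only
      rw [clamp_of_mem hk1, clamp_of_mem hk2]
    rw [hFe] at hd
    exact ⟨hasDerivWithinAt_fst hd, hasDerivWithinAt_snd hd⟩
  · intro t ht
    have hk := hgK t ht
    have hk1 : (g t).1 ∈ Icc us uS := hk.1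
    have hk2 : (g t).2 ∈ Icc vs vS := hk.2
    rw [← hus, ← huS, ← hvs, ← hvS]
    exact ⟨hk1.1, hk1.2, hk2.1, hk2.2⟩


end LVAux



/-- For the nonautonomous Lotka–Volterra competition system with coefficients
bounded above and below by positive constants and satisfying
`a₁^L > c₁^M a₂^M / c₂^L` and `a₂^L > a₁^M b₂^M / b₁^L`, for every `t₀` there exists a
solution `(u₀, v₀)` on `[t₀, ∞)` whose components stay between the indicated positive
constants. -/
theorem lotka_volterra_exists_bounded_positive_solution
    (a₁ b₁ c₁ a₂ b₂ c₂ : ℝ → ℝ)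
    (ha₁ : Continuous a₁) (hb₁ : Continuous b₁) (hc₁ : Continuous c₁)
    (ha₂ : Continuous a₂) (hb₂ : Continuous b₂) (hc₂ : Continuous c₂)
    (ha₁B : BddAbove (Set.range a₁)) (hb₁B : BddAbove (Set.range b₁))
    (hc₁B : BddAbove (Set.range c₁)) (ha₂B : BddAbove (Set.range a₂))
    (hb₂B : BddAbove (Set.range b₂)) (hc₂B : BddAbove (Set.range c₂))
    (ha₁pos : 0 < ⨅ t, a₁ t) (hb₁pos : 0 < ⨅ t, b₁ t) (hc₁pos : 0 < ⨅ t, c₁ t)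
    (ha₂pos : 0 < ⨅ t, a₂ t) (hb₂pos : 0 < ⨅ t, b₂ t) (hc₂pos : 0 < ⨅ t, c₂ t)
    (hcond₁ : (⨆ t, c₁ t) * (⨆ t, a₂ t) / (⨅ t, c₂ t) < ⨅ t, a₁ t)
    (hcond₂ : (⨆ t, a₁ t) * (⨆ t, b₂ t) / (⨅ t, b₁ t) < ⨅ t, a₂ t)
    (t₀ : ℝ) :
    ∃ u v : ℝ → ℝ,
      (∀ t ∈ Set.Ici t₀,
        HasDerivWithinAt u (u t * (a₁ t - b₁ t * u t - c₁ t * v t)) (Set.Ici t₀) t ∧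
        HasDerivWithinAt v (v t * (a₂ t - b₂ t * u t - c₂ t * v t)) (Set.Ici t₀) t) ∧
      0 < ((⨅ s, a₁ s) * (⨅ s, c₂ s) - (⨆ s, c₁ s) * (⨆ s, a₂ s)) /
          ((⨆ s, b₁ s) * (⨅ s, c₂ s) - (⨆ s, c₁ s) * (⨅ s, b₂ s)) ∧
      0 < ((⨅ s, b₁ s) * (⨅ s, a₂ s) - (⨆ s, a₁ s) * (⨆ s, b₂ s)) /
          ((⨅ s, b₁ s) * (⨆ s, c₂ s) - (⨅ s, c₁ s) * (⨆ s, b₂ s)) ∧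
      ∀ t ∈ Set.Ici t₀,
        ((⨅ s, a₁ s) * (⨅ s, c₂ s) - (⨆ s, c₁ s) * (⨆ s, a₂ s)) /
            ((⨆ s, b₁ s) * (⨅ s, c₂ s) - (⨆ s, c₁ s) * (⨅ s, b₂ s)) ≤ u t ∧
        u t ≤ ((⨆ s, a₁ s) * (⨆ s, c₂ s) - (⨅ s, c₁ s) * (⨅ s, a₂ s)) /
            ((⨅ s, b₁ s) * (⨆ s, c₂ s) - (⨅ s, c₁ s) * (⨆ s, b₂ s)) ∧
        ((⨅ s, b₁ s) * (⨅ s, a₂ s) - (⨆ s, a₁ s) * (⨆ s, b₂ s)) /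
            ((⨅ s, b₁ s) * (⨆ s, c₂ s) - (⨅ s, c₁ s) * (⨆ s, b₂ s)) ≤ v t ∧
        v t ≤ ((⨆ s, b₁ s) * (⨆ s, a₂ s) - (⨅ s, a₁ s) * (⨅ s, b₂ s)) /
            ((⨆ s, b₁ s) * (⨅ s, c₂ s) - (⨆ s, c₁ s) * (⨅ s, b₂ s)) := by
  have bddb : ∀ f : ℝ → ℝ, 0 < (⨅ t, f t) → BddBelow (Set.range f) := by
    intro f hf
    by_contra hb
    rw [Real.iInf_of_not_bddBelow hb] at hf
    exact lt_irrefl 0 hf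
  exact LVAux.main_aux a₁ b₁ c₁ a₂ b₂ c₂ ha₁ hb₁ hc₁ ha₂ hb₂ hc₂
    (⨅ t, a₁ t) (⨆ t, a₁ t) (⨅ t, b₁ t) (⨆ t, b₁ t) (⨅ t, c₁ t) (⨆ t, c₁ t)
    (⨅ t, a₂ t) (⨆ t, a₂ t) (⨅ t, b₂ t) (⨆ t, b₂ t) (⨅ t, c₂ t) (⨆ t, c₂ t)
    (fun t => ciInf_le (bddb a₁ ha₁pos) t) (fun t => le_ciSup ha₁B t)
    (fun t => ciInf_le (bddb b₁ hb₁pos) t) (fun t => le_ciSup hb₁B t)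
    (fun t => ciInf_le (bddb c₁ hc₁pos) t) (fun t => le_ciSup hc₁B t)
    (fun t => ciInf_le (bddb a₂ ha₂pos) t) (fun t => le_ciSup ha₂B t)
    (fun t => ciInf_le (bddb b₂ hb₂pos) t) (fun t => le_ciSup hb₂B t)
    (fun t => ciInf_le (bddb c₂ hc₂pos) t) (fun t => le_ciSup hc₂B t)
    ha₁pos hb₁pos hc₁pos ha₂pos hb₂pos hc₂pos
    ((div_lt_iff₀ hc₂pos).mp hcond₁) (by have := (div_lt_iff₀ hb₁pos).mp hcond₂; linarith [this]) t₀
end
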